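/- arXiv:1703.05876 — 8 statements merged into one kernel-verified Lean document; each statement's English description precedes it below -/
import Mathlib

section
/- Let d, D, N be natural numbers, let Π be a d×d complex matrix that is an orthogonal projection (Hermitian and idempotent) of rank D, let ρ₁,…,ρ_N be d×d density matrices (positive semidefinite, trace 1) each supported in the range of Π (i.e. Π ρᵢ Π = ρᵢ), and let M₁,…,M_N be positive semidefinite d×d matrices with Σᵢ Mᵢ = I (a POVM). Then the total success probability of discriminating the states satisfies Σᵢ Re Tr(Mᵢ ρᵢ) ≤ D; in particular, the average success probability (1/N) Σᵢ Re Tr(Mᵢ ρᵢ) is at most D/N. -/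
open scoped ComplexOrder

open Matrix

lemma diag_nonneg' {n : ℕ} {A : Matrix (Fin n) (Fin n) ℂ} (hA : A.PosSemidef) (i : Fin n) :
    0 ≤ A i i := by
  exact hA.diag_nonneg

lemma trace_nonneg' {n : ℕ} {A : Matrix (Fin n) (Fin n) ℂ} (hA : A.PosSemidef) :
    0 ≤ A.trace :=
  Finset.sum_nonneg fun i _ => diag_nonneg' hA i

open scoped MatrixOrder in
lemma trace_mul_nonneg' {n : ℕ} {A B : Matrix (Fin n) (Fin n) ℂ}
    (hA : A.PosSemidef) (hB : B.PosSemidef) : 0 ≤ (A * B).trace := by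
  obtain ⟨C, rfl⟩ := CStarAlgebra.nonneg_iff_eq_star_mul_self.mp hA.nonneg
  rw [Matrix.star_eq_conjTranspose]
  rw [show (Cᴴ * C * B).trace = (C * B * Cᴴ).trace from (Matrix.trace_mul_cycle C B Cᴴ).symm]
  exact trace_nonneg' (hB.mul_mul_conjTranspose_same C)

lemma one_sub_psd {n : ℕ} {A : Matrix (Fin n) (Fin n) ℂ}
    (hA : A.PosSemidef) (htr : A.trace = 1) : (1 - A).PosSemidef := by
  classical
  have h := hA.1
  set U : Matrix (Fin n) (Fin n) ℂ := (h.eigenvectorUnitary : Matrix (Fin n) (Fin n) ℂ) with hU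
  have hUU : U * star U = 1 := (Matrix.mem_unitaryGroup_iff).mp h.eigenvectorUnitary.2
  have hUU' : star U * U = 1 := (Matrix.mem_unitaryGroup_iff').mp h.eigenvectorUnitary.2
  have hspec : A = U * Matrix.diagonal (RCLike.ofReal ∘ h.eigenvalues) * star U :=
    h.spectral_theorem
  have htr' : ∑ i, h.eigenvalues i = 1 := by
    have h1 : A.trace = ∑ i, (h.eigenvalues i : ℂ) := by
      conv_lhs => rw [hspec]
      rw [Matrix.trace_mul_cycle, hUU', Matrix.one_mul, Matrix.trace_diagonal]
      simp
    rw [htr] at h1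
    exact_mod_cast h1.symm
  have hle : ∀ i, h.eigenvalues i ≤ 1 := by
    intro i
    calc h.eigenvalues i ≤ ∑ j, h.eigenvalues j :=
      Finset.single_le_sum (fun j _ => hA.eigenvalues_nonneg j) (Finset.mem_univ i)
    _ = 1 := htr'
  have key : (1 : Matrix (Fin n) (Fin n) ℂ) - A
      = U * (Matrix.diagonal (fun i => 1 - (h.eigenvalues i : ℂ))) * star U := by
    have h1 : (1 : Matrix (Fin n) (Fin n) ℂ) = U * 1 * star U := by
      rw [Matrix.mul_one, hUU]
    conv_lhs => rw [h1, hspec]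
    rw [← Matrix.sub_mul, ← Matrix.mul_sub]
    congr 2
    rw [← Matrix.diagonal_one, Matrix.diagonal_sub]
    rfl
  rw [key]
  have hdiag : (Matrix.diagonal (fun i => 1 - (h.eigenvalues i : ℂ))).PosSemidef := by
    rw [Matrix.posSemidef_diagonal_iff]
    intro i
    have h2 : (0:ℝ) ≤ 1 - h.eigenvalues i := by linarith [hle i]
    calc (0:ℂ) ≤ ((1 - h.eigenvalues i : ℝ) : ℂ) := Complex.zero_le_real.mpr h2
    _ = 1 - (h.eigenvalues i : ℂ) := by push_cast; ring
  simpa [Matrix.star_eq_conjTranspose] using hdiag.mul_mul_conjTranspose_same U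

lemma trace_proj {n : ℕ} {P : Matrix (Fin n) (Fin n) ℂ}
    (hH : P.IsHermitian) (hI : P * P = P) : P.trace = (P.rank : ℂ) := by
  classical
  set U : Matrix (Fin n) (Fin n) ℂ := (hH.eigenvectorUnitary : Matrix (Fin n) (Fin n) ℂ) with hU
  have hUU : U * star U = 1 := (Matrix.mem_unitaryGroup_iff).mp hH.eigenvectorUnitary.2
  have hUU' : star U * U = 1 := (Matrix.mem_unitaryGroup_iff').mp hH.eigenvectorUnitary.2
  have cancel : ∀ X : Matrix (Fin n) (Fin n) ℂ, star U * (U * X) = X := fun X => by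
    rw [← Matrix.mul_assoc, hUU', Matrix.one_mul]
  set Dg : Matrix (Fin n) (Fin n) ℂ := Matrix.diagonal (RCLike.ofReal ∘ hH.eigenvalues) with hDg
  have hspec : P = U * Dg * star U := hH.spectral_theorem
  have h2 : U * Dg * star U * (U * Dg * star U) = U * Dg * star U := by rw [← hspec]; exact hI
  have h3 : U * Dg * star U * (U * Dg * star U) = U * (Dg * Dg) * star U := by
    simp only [Matrix.mul_assoc, cancel]
  have h4 : U * (Dg * Dg) * star U = U * Dg * star U := h3.symm.trans h2
  have h5 := congrArg (fun X => star U * X * U) h4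
  simp only [Matrix.mul_assoc, cancel, hUU', Matrix.mul_one] at h5
  have heig : ∀ i, hH.eigenvalues i = 0 ∨ hH.eigenvalues i = 1 := by
    intro i
    have h6 := congrFun (congrFun h5 i) i
    simp only [hDg, Matrix.diagonal_mul_diagonal, Matrix.diagonal_apply_eq,
      Function.comp_apply, Pi.mul_apply] at h6
    have h7 : hH.eigenvalues i * hH.eigenvalues i = hH.eigenvalues i := by exact_mod_cast h6
    have h8 : hH.eigenvalues i * (hH.eigenvalues i - 1) = 0 := by linear_combination h7
    rcases mul_eq_zero.mp h8 with h | h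
    · exact Or.inl h
    · exact Or.inr (by linarith)
  have htr : P.trace = ∑ i, (hH.eigenvalues i : ℂ) := by
    conv_lhs => rw [hspec]
    rw [Matrix.trace_mul_cycle, hUU', Matrix.one_mul, Matrix.trace_diagonal]
    rfl
  have hsum : ∑ i, (hH.eigenvalues i : ℂ)
      = ∑ i, (if hH.eigenvalues i ≠ 0 then (1:ℂ) else 0) := by
    apply Finset.sum_congr rfl
    intro i _
    rcases heig i with h | h <;> simp [h]
  rw [htr, hsum, Finset.sum_boole, hH.rank_eq_card_non_zero_eigs, Fintype.card_subtype]


/-- The total success probability of discriminating `N` states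
supported in the range of a rank-`D` projection, using a POVM, is at most `D`;
in particular the average success probability is at most `D / N`. -/
theorem stmt_0 (d D N : ℕ) (Pr : Matrix (Fin d) (Fin d) ℂ)
    (hHerm : Pr.IsHermitian) (hIdem : Pr * Pr = Pr) (hrank : Pr.rank = D)
    (ρ : Fin N → Matrix (Fin d) (Fin d) ℂ)
    (hρpos : ∀ i, (ρ i).PosSemidef) (hρtr : ∀ i, (ρ i).trace = 1)
    (hsupp : ∀ i, Pr * ρ i * Pr = ρ i)
    (M : Fin N → Matrix (Fin d) (Fin d) ℂ)
    (hMpos : ∀ i, (M i).PosSemidef) (hMsum : ∑ i, M i = 1) :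
    (∑ i, (Matrix.trace (M i * ρ i)).re ≤ (D : ℝ)) ∧
    (1 / (N : ℝ)) * ∑ i, (Matrix.trace (M i * ρ i)).re ≤ (D : ℝ) / (N : ℝ) := by
  have hPrH : Prᴴ = Pr := hHerm
  have key : ∀ i, Matrix.trace (M i * ρ i) ≤ (Pr * M i * Pr).trace := by
    intro i
    have hQ : (Pr * M i * Pr).PosSemidef := by
      have := (hMpos i).mul_mul_conjTranspose_same Pr
      rwa [hPrH] at this
    have h1 : Matrix.trace (M i * ρ i) = ((Pr * M i * Pr) * ρ i).trace := by
      conv_lhs => rw [← hsupp i]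
      rw [show M i * (Pr * ρ i * Pr) = (M i * Pr * ρ i) * Pr by noncomm_ring,
        Matrix.trace_mul_comm,
        show Pr * (M i * Pr * ρ i) = (Pr * M i * Pr) * ρ i by noncomm_ring]
    have h2 : 0 ≤ ((Pr * M i * Pr) * (1 - ρ i)).trace :=
      trace_mul_nonneg' hQ (one_sub_psd (hρpos i) (hρtr i))
    rw [Matrix.mul_sub, Matrix.mul_one, Matrix.trace_sub] at h2
    rw [h1]
    exact sub_nonneg.mp h2
  have hsum : ∑ i, (Pr * M i * Pr).trace = (D : ℂ) := by
    have : ∑ i, Pr * M i * Pr = Pr * (∑ i, M i) * Pr := by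
      rw [Finset.mul_sum, Finset.sum_mul]
    rw [← Matrix.trace_sum, this, hMsum, Matrix.mul_one, hIdem, trace_proj hHerm hIdem, hrank]
  have main : ∑ i, (Matrix.trace (M i * ρ i)).re ≤ (D : ℝ) := by
    have h3 : ∑ i, Matrix.trace (M i * ρ i) ≤ (D : ℂ) := by
      rw [← hsum]
      exact Finset.sum_le_sum fun i _ => key i
    have h4 := (Complex.le_def.mp h3).1
    simpa using h4
  refine ⟨main, ?_⟩
  have hN : (0:ℝ) ≤ 1 / (N:ℝ) := by positivity
  calc (1 / (N:ℝ)) * ∑ i, (Matrix.trace (M i * ρ i)).re ≤ (1 / (N:ℝ)) * D :=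
    mul_le_mul_of_nonneg_left main hN
  _ = (D:ℝ)/(N:ℝ) := by ring
end

section
/- (Size–accuracy bound.) Let d, D be natural numbers, Π a d×d complex matrix that is an orthogonal projection of rank D, and ρ : ℝ → (d×d complex matrices) a family such that for every T, ρ(T) is a density matrix with Π ρ(T) Π = ρ(T). Let M : Set ℝ → (d×d complex matrices) satisfy: M(S) is positive semidefinite for every S, M(ℝ) = I, and M(S ∪ S') = M(S) + M(S') whenever S and S' are disjoint. Let T_min < T_max be reals, P ∈ (0,1], and δ > 0, and suppose that for every T ∈ [T_min, T_max] the probability that the measurement outcome lies within δ/2 of the true value satisfies Re Tr(M((T−δ/2, T+δ/2)) · ρ(T)) ≥ P. Then δ ≥ P·(T_max − T_min)/(D+1). -/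
open scoped ComplexOrder

open Matrix in
lemma aux_trace_nonneg {d : ℕ} {A : Matrix (Fin d) (Fin d) ℂ} (hA : A.PosSemidef) :
    0 ≤ A.trace := by
  exact hA.trace_nonneg

open Matrix in
lemma aux_trace_mul_nonneg {d : ℕ} {A B : Matrix (Fin d) (Fin d) ℂ}
    (hA : A.PosSemidef) (hB : B.PosSemidef) : 0 ≤ (A * B).trace := by
  classical
  have hH := hA.1
  set U : Matrix (Fin d) (Fin d) ℂ := (hH.eigenvectorUnitary : Matrix (Fin d) (Fin d) ℂ) with hUdef
  set E : Matrix (Fin d) (Fin d) ℂ :=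
    Matrix.diagonal (fun i => ((Real.sqrt (hH.eigenvalues i) : ℝ) : ℂ)) with hE
  have hEE : E * Eᴴ = Matrix.diagonal (RCLike.ofReal ∘ hH.eigenvalues) := by
    rw [hE, Matrix.diagonal_conjTranspose, Matrix.diagonal_mul_diagonal]
    congr 1; funext i
    simp only [Pi.star_apply, Complex.star_def, Complex.conj_ofReal, Function.comp_apply]
    rw [← Complex.ofReal_mul, Real.mul_self_sqrt (hA.eigenvalues_nonneg i)]; rfl
  have hAeq : A = (U * E) * (U * E)ᴴ := by
    conv_lhs => rw [hH.spectral_theorem]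
    rw [Unitary.conjStarAlgAut_apply, Matrix.conjTranspose_mul, Matrix.mul_assoc U E,
      ← Matrix.mul_assoc E, hEE]
    simp only [Matrix.mul_assoc, Matrix.star_eq_conjTranspose]
    rfl
  rw [hAeq, Matrix.mul_assoc, Matrix.trace_mul_comm]
  exact (hB.conjTranspose_mul_mul_same (U * E)).trace_nonneg

open Matrix in
lemma aux_one_sub_psd {d : ℕ} {ρ : Matrix (Fin d) (Fin d) ℂ} (hρ : ρ.PosSemidef)
    (htr : ρ.trace = 1) : ((1 : Matrix (Fin d) (Fin d) ℂ) - ρ).PosSemidef := by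
  classical
  have hH := hρ.1
  have hU1 : star (hH.eigenvectorUnitary : Matrix (Fin d) (Fin d) ℂ) *
      (hH.eigenvectorUnitary : Matrix (Fin d) (Fin d) ℂ) = 1 :=
    Matrix.mem_unitaryGroup_iff'.mp hH.eigenvectorUnitary.2
  have hU2 : (hH.eigenvectorUnitary : Matrix (Fin d) (Fin d) ℂ) *
      star (hH.eigenvectorUnitary : Matrix (Fin d) (Fin d) ℂ) = 1 :=
    Matrix.mem_unitaryGroup_iff.mp hH.eigenvectorUnitary.2
  have hspec := hH.spectral_theorem
  have htrsum : ∑ i, hH.eigenvalues i = 1 := by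
    have h2 : ρ.trace = ∑ i, (hH.eigenvalues i : ℂ) := by
      conv_lhs => rw [hspec]
      rw [Unitary.conjStarAlgAut_apply, Matrix.trace_mul_cycle, hU1, one_mul, Matrix.trace_diagonal]
      simp
    rw [htr] at h2
    exact_mod_cast h2.symm
  have hle : ∀ i, hH.eigenvalues i ≤ 1 := by
    intro i
    rw [← htrsum]
    exact Finset.single_le_sum (fun j _ => hρ.eigenvalues_nonneg j) (Finset.mem_univ i)
  have hdiag : Matrix.PosSemidef
      (Matrix.diagonal (fun i => (1 : ℂ) - (hH.eigenvalues i : ℂ))) := by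
    refine Matrix.PosSemidef.diagonal fun i => ?_
    show (0 : ℂ) ≤ 1 - (hH.eigenvalues i : ℂ)
    have h3 : ((1 - hH.eigenvalues i : ℝ) : ℂ) = 1 - (hH.eigenvalues i : ℂ) := by push_cast; ring
    rw [← h3]
    exact_mod_cast sub_nonneg.mpr (hle i)
  have key : (1 : Matrix (Fin d) (Fin d) ℂ) - ρ
      = (hH.eigenvectorUnitary : Matrix (Fin d) (Fin d) ℂ) *
        Matrix.diagonal (fun i => (1 : ℂ) - (hH.eigenvalues i : ℂ)) *
        star (hH.eigenvectorUnitary : Matrix (Fin d) (Fin d) ℂ) := by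
    have h4 : Matrix.diagonal (fun i => (1 : ℂ) - (hH.eigenvalues i : ℂ))
        = 1 - Matrix.diagonal (RCLike.ofReal ∘ hH.eigenvalues) := by
      rw [← Matrix.diagonal_one, ← Matrix.diagonal_sub]
      rfl
    rw [h4, Matrix.mul_sub, Matrix.sub_mul, mul_one, hU2]
    conv_lhs => rw [hspec]
    rw [Unitary.conjStarAlgAut_apply]
  rw [key]
  have h5 := hdiag.mul_mul_conjTranspose_same
    (hH.eigenvectorUnitary : Matrix (Fin d) (Fin d) ℂ)
  rwa [← Matrix.star_eq_conjTranspose] at h5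

open Matrix in
lemma aux_trace_eq_sum {d : ℕ} {A : Matrix (Fin d) (Fin d) ℂ} (hA : A.IsHermitian) :
    A.trace = ∑ i, (hA.eigenvalues i : ℂ) := by
  have hU1 : star (hA.eigenvectorUnitary : Matrix (Fin d) (Fin d) ℂ) *
      (hA.eigenvectorUnitary : Matrix (Fin d) (Fin d) ℂ) = 1 :=
    Matrix.mem_unitaryGroup_iff'.mp hA.eigenvectorUnitary.2
  conv_lhs => rw [hA.spectral_theorem]
  rw [Unitary.conjStarAlgAut_apply, Matrix.trace_mul_cycle, hU1, one_mul, Matrix.trace_diagonal]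
  simp

open Matrix in
lemma aux_proj_eigs {d : ℕ} {A : Matrix (Fin d) (Fin d) ℂ} (hA : A.IsHermitian)
    (hIdem : A * A = A) (i : Fin d) : hA.eigenvalues i = 0 ∨ hA.eigenvalues i = 1 := by
  have hv := hA.mulVec_eigenvectorBasis i
  have hv2 : (A * A) *ᵥ ⇑(hA.eigenvectorBasis i)
      = ((hA.eigenvalues i * hA.eigenvalues i : ℝ)) • ⇑(hA.eigenvectorBasis i) := by
    rw [← Matrix.mulVec_mulVec, hv, Matrix.mulVec_smul, hv, smul_smul]
  rw [hIdem, hv] at hv2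
  have hvne : ⇑(hA.eigenvectorBasis i) ≠ 0 := by simpa using hA.eigenvectorBasis.orthonormal.ne_zero i
  have hzero : ((hA.eigenvalues i * hA.eigenvalues i - hA.eigenvalues i : ℝ))
      • ⇑(hA.eigenvectorBasis i) = 0 := by
    rw [sub_smul, ← hv2, sub_self]
  rcases smul_eq_zero.mp hzero with h0 | h0
  · have h1 : hA.eigenvalues i * (hA.eigenvalues i - 1) = 0 := by nlinarith
    rcases mul_eq_zero.mp h1 with h | h
    · exact Or.inl h
    · exact Or.inr (by linarith)
  · exact absurd h0 hvne

open Matrix in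
lemma aux_trace_proj {d D : ℕ} {Pr : Matrix (Fin d) (Fin d) ℂ}
    (hHerm : Pr.IsHermitian) (hIdem : Pr * Pr = Pr) (hrank : Pr.rank = D) :
    Pr.trace = (D : ℂ) := by
  classical
  rw [aux_trace_eq_sum hHerm]
  have hcard : Pr.rank = Fintype.card {i // hHerm.eigenvalues i ≠ 0} :=
    hHerm.rank_eq_card_non_zero_eigs
  have h1 : ∑ i, (hHerm.eigenvalues i : ℂ)
      = ((Finset.univ.filter (fun i => hHerm.eigenvalues i ≠ 0)).card : ℂ) := by
    rw [Finset.card_filter]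
    push_cast
    apply Finset.sum_congr rfl
    intro i _
    rcases aux_proj_eigs hHerm hIdem i with h | h <;> simp [h]
  rw [h1, ← Fintype.card_subtype, ← hcard, hrank]

open Matrix in
lemma aux_M_empty {d : ℕ} (M : Set ℝ → Matrix (Fin d) (Fin d) ℂ)
    (hMadd : ∀ S S' : Set ℝ, Disjoint S S' → M (S ∪ S') = M S + M S') :
    M ∅ = 0 := by
  have h := hMadd ∅ ∅ (disjoint_bot_left)
  rw [Set.union_empty] at h
  exact (left_eq_add.mp h)

open Matrix in
lemma aux_Madd {d : ℕ} (M : Set ℝ → Matrix (Fin d) (Fin d) ℂ)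
    (hMadd : ∀ S S' : Set ℝ, Disjoint S S' → M (S ∪ S') = M S + M S')
    (I : ℕ → Set ℝ) (hdis : ∀ i j, i ≠ j → Disjoint (I i) (I j)) (m : ℕ) :
    M (⋃ k ∈ Finset.range m, I k) = ∑ k ∈ Finset.range m, M (I k) := by
  induction m with
  | zero => simpa using aux_M_empty M hMadd
  | succ m ih =>
      rw [Finset.range_add_one, Finset.set_biUnion_insert, Finset.sum_insert (by simp)]
      rw [hMadd _ _ ?_, ih]
      simp only [Set.disjoint_iUnion_right]
      intro k hk
      simp only [Finset.mem_range] at hk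
      exact hdis m k (Nat.ne_of_gt hk)

/-- Size–accuracy bound: if a parameter `T` is encoded in density
matrices supported in a rank-`D` subspace and a (finitely additive) POVM on ℝ
locates `T` within an interval of size `δ` with probability at least `P` for
every `T` in the fiducial interval, then `δ ≥ P (T_max − T_min)/(D+1)`. -/
theorem stmt_1 (d D : ℕ) (Pr : Matrix (Fin d) (Fin d) ℂ)
    (hHerm : Pr.IsHermitian) (hIdem : Pr * Pr = Pr) (hrank : Pr.rank = D)
    (ρ : ℝ → Matrix (Fin d) (Fin d) ℂ)
    (hρpos : ∀ T, (ρ T).PosSemidef) (hρtr : ∀ T, (ρ T).trace = 1)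
    (hsupp : ∀ T, Pr * ρ T * Pr = ρ T)
    (M : Set ℝ → Matrix (Fin d) (Fin d) ℂ)
    (hMpos : ∀ S, (M S).PosSemidef) (hMuniv : M Set.univ = 1)
    (hMadd : ∀ S S' : Set ℝ, Disjoint S S' → M (S ∪ S') = M S + M S')
    (Tmin Tmax : ℝ) (hT : Tmin < Tmax) (P : ℝ) (hP : P ∈ Set.Ioc (0:ℝ) 1)
    (δ : ℝ) (hδ : 0 < δ)
    (hacc : ∀ T ∈ Set.Icc Tmin Tmax,
      P ≤ (Matrix.trace (M (Set.Ioo (T - δ/2) (T + δ/2)) * ρ T)).re) :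
    P * (Tmax - Tmin) / ((D : ℝ) + 1) ≤ δ := by
  classical
  obtain ⟨hP0, hP1⟩ := hP
  have hPrPSD : Pr.PosSemidef := by
    have h := Matrix.posSemidef_conjTranspose_mul_self Pr
    rwa [hHerm.eq, hIdem] at h
  set n := ⌊(Tmax - Tmin)/δ⌋₊ with hn
  set Tk : ℕ → ℝ := fun k => Tmin + k * δ with hTk
  set I : ℕ → Set ℝ := fun k => Set.Ioo (Tk k - δ/2) (Tk k + δ/2) with hI
  have hTT : (0:ℝ) ≤ Tmax - Tmin := by linarith
  have hfl : (n : ℝ) ≤ (Tmax - Tmin)/δ := Nat.floor_le (by positivity)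
  have hnle : (n : ℝ) * δ ≤ Tmax - Tmin := by
    calc (n:ℝ) * δ ≤ (Tmax - Tmin)/δ * δ := mul_le_mul_of_nonneg_right hfl hδ.le
      _ = Tmax - Tmin := div_mul_cancel₀ _ hδ.ne'
  have hlt : Tmax - Tmin < ((n:ℝ) + 1) * δ := by
    have h := Nat.lt_floor_add_one ((Tmax - Tmin)/δ)
    calc Tmax - Tmin = (Tmax - Tmin)/δ * δ := (div_mul_cancel₀ _ hδ.ne').symm
      _ < ((n:ℝ)+1) * δ := mul_lt_mul_of_pos_right h hδ
  have hmem : ∀ k, k ≤ n → Tk k ∈ Set.Icc Tmin Tmax := by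
    intro k hk
    constructor
    · show Tmin ≤ Tmin + k * δ
      have : (0:ℝ) ≤ (k:ℝ) * δ := by positivity
      linarith
    · show Tmin + k * δ ≤ Tmax
      have hkn : (k:ℝ) ≤ (n:ℝ) := by exact_mod_cast hk
      have : (k:ℝ) * δ ≤ (n:ℝ) * δ := mul_le_mul_of_nonneg_right hkn hδ.le
      linarith
  have hdis : ∀ i j : ℕ, i ≠ j → Disjoint (I i) (I j) := by
    have hord : ∀ i j : ℕ, i < j → Disjoint (I i) (I j) := by
      intro i j hij
      rw [Set.disjoint_left]
      intro x hxi hxj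
      simp only [hI, Set.mem_Ioo, hTk] at hxi hxj
      have h1 : (i:ℝ) + 1 ≤ (j:ℝ) := by exact_mod_cast hij
      have h2 : ((i:ℝ) + 1) * δ ≤ (j:ℝ) * δ := mul_le_mul_of_nonneg_right h1 hδ.le
      have := hxi.2
      have := hxj.1
      nlinarith
    intro i j hij
    rcases lt_or_gt_of_ne hij with h | h
    · exact hord i j h
    · exact (hord j i h).symm
  -- per-k bound : P ≤ Re trace (Pr * M (I k) * Pr)
  have hkey : ∀ k, k ≤ n → P ≤ (Matrix.trace (Pr * M (I k) * Pr)).re := by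
    intro k hk
    have hT' := hmem k hk
    have hstep1 := hacc (Tk k) hT'
    have htreq : Matrix.trace (M (I k) * ρ (Tk k))
        = Matrix.trace ((Pr * M (I k) * Pr) * ρ (Tk k)) := by
      conv_lhs => rw [← hsupp (Tk k)]
      have e1 : M (I k) * (Pr * ρ (Tk k) * Pr) = (M (I k) * Pr * ρ (Tk k)) * Pr := by
        simp only [Matrix.mul_assoc]
      have e2 : Pr * (M (I k) * Pr * ρ (Tk k)) = (Pr * M (I k) * Pr) * ρ (Tk k) := by
        simp only [Matrix.mul_assoc]
      rw [e1, Matrix.trace_mul_comm, e2]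
    have hN : (Pr * M (I k) * Pr).PosSemidef := by
      have h := (hMpos (I k)).mul_mul_conjTranspose_same Pr
      rwa [hHerm.eq] at h
    have hdiff := aux_trace_mul_nonneg hN (aux_one_sub_psd (hρpos (Tk k)) (hρtr (Tk k)))
    rw [Matrix.mul_sub, mul_one, Matrix.trace_sub] at hdiff
    have hre : (Matrix.trace ((Pr * M (I k) * Pr) * ρ (Tk k))).re
        ≤ (Matrix.trace (Pr * M (I k) * Pr)).re := by
      have := (Complex.le_def.mp hdiff).1
      simp only [Complex.zero_re, Complex.sub_re] at this
      linarith
    calc P ≤ (Matrix.trace (M (I k) * ρ (Tk k))).re := by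
            convert hstep1 using 4
      _ = (Matrix.trace ((Pr * M (I k) * Pr) * ρ (Tk k))).re := by rw [htreq]
      _ ≤ _ := hre
  -- sum over k
  have hsum : ((n:ℝ) + 1) * P
      ≤ (Matrix.trace (Pr * M (⋃ k ∈ Finset.range (n+1), I k) * Pr)).re := by
    have h1 : ∑ k ∈ Finset.range (n+1), P
        ≤ ∑ k ∈ Finset.range (n+1), (Matrix.trace (Pr * M (I k) * Pr)).re := by
      apply Finset.sum_le_sum
      intro k hk
      exact hkey k (Nat.lt_succ_iff.mp (Finset.mem_range.mp hk))
    have h2 : ∑ k ∈ Finset.range (n+1), (Matrix.trace (Pr * M (I k) * Pr)).re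
        = (Matrix.trace (Pr * M (⋃ k ∈ Finset.range (n+1), I k) * Pr)).re := by
      rw [aux_Madd M hMadd I hdis (n+1)]
      rw [Finset.mul_sum, Finset.sum_mul, Matrix.trace_sum]
      rw [Complex.re_sum]
    rw [Finset.sum_const, Finset.card_range, nsmul_eq_mul] at h1
    push_cast at h1
    rw [h2] at h1
    linarith
  -- global bound: Re trace (Pr * M U * Pr) ≤ D
  set U : Set ℝ := ⋃ k ∈ Finset.range (n+1), I k with hU
  have hMU : ((1 : Matrix (Fin d) (Fin d) ℂ) - M U).PosSemidef := by
    have h := hMadd U Uᶜ disjoint_compl_right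
    rw [Set.union_compl_self, hMuniv] at h
    have h2 : (1 : Matrix (Fin d) (Fin d) ℂ) - M U = M Uᶜ := by
      rw [h, add_sub_cancel_left]
    rw [h2]
    exact hMpos Uᶜ
  have hfinal : (Matrix.trace (Pr * M U * Pr)).re ≤ (D : ℝ) := by
    have hdiff := aux_trace_mul_nonneg hMU hPrPSD
    have e3 : Matrix.trace (Pr * M U * Pr) + Matrix.trace (((1:Matrix (Fin d) (Fin d) ℂ) - M U) * Pr)
        = (D : ℂ) := by
      rw [← aux_trace_proj hHerm hIdem hrank]
      rw [Matrix.trace_mul_cycle Pr (M U) Pr, hIdem, Matrix.sub_mul, one_mul,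
        Matrix.trace_sub, Matrix.trace_mul_comm (M U) Pr]
      ring
    have h4 := congrArg Complex.re e3
    simp only [Complex.add_re, Complex.natCast_re] at h4
    have h5 := (Complex.le_def.mp hdiff).1
    simp only [Complex.zero_re] at h5
    linarith
  -- conclude
  have hcount : ((n:ℝ) + 1) * P ≤ (D : ℝ) := le_trans hsum hfinal
  rw [div_le_iff₀ (by positivity : (0:ℝ) < (D:ℝ) + 1)]
  nlinarith [mul_le_mul_of_nonneg_left hlt.le hP0.le, mul_le_mul_of_nonneg_right hcount hδ.le]
end

section
/- (Quantum memory bound.) Let q be a natural number and set d = 2^q (a memory of q qubits). Let ρ : ℝ → (d×d complex matrices) with each ρ(T) a density matrix, and let M : Set ℝ → (d×d complex matrices) satisfy: M(S) positive semidefinite for all S, M(ℝ) = I, and M(S ∪ S') = M(S) + M(S') for disjoint S, S'. Let T_min < T_max, P ∈ (0,1], δ > 0, and suppose Re Tr(M((T−δ/2, T+δ/2)) · ρ(T)) ≥ P for every T ∈ [T_min, T_max]. Then 2^q ≥ P·(T_max − T_min)/δ − 1; equivalently, the number of memory qubits satisfies q ≥ log₂(P·(T_max − T_min)/δ − 1)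 whenever the right-hand side is defined. -/
open scoped ComplexOrder

section helpers
open Matrix

variable {n : Type*} [Fintype n] [DecidableEq n]

lemma psd_trace_re_nonneg {A : Matrix n n ℂ} (hA : A.PosSemidef) :
    0 ≤ A.trace.re := by
  have htr : A.trace = ∑ i, A i i := rfl
  rw [htr, Complex.re_sum]
  refine Finset.sum_nonneg fun i _ => ?_
  have h := hA.re_dotProduct_nonneg (Pi.single i 1)
  simpa [dotProduct, Matrix.mulVec, Pi.single_apply, Finset.sum_ite_eq,
    Finset.mul_sum] using h

lemma psd_trace_mul_re_nonneg {A B : Matrix n n ℂ} (hA : A.PosSemidef)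
    (hB : B.PosSemidef) : 0 ≤ (Matrix.trace (A * B)).re := by
  obtain ⟨S, hS, hSS⟩ : ∃ S : Matrix n n ℂ, S.PosSemidef ∧ S * S = B := by
    open scoped MatrixOrder in
    exact ⟨CFC.sqrt B, (CFC.sqrt_nonneg B).posSemidef, CFC.sqrt_mul_sqrt_self B hB.nonneg⟩
  have h1 : A * B = A * (S * S) := by rw [hSS]
  have h2 : Matrix.trace (A * B) = Matrix.trace (S * A * S) := by
    rw [h1, ← mul_assoc, Matrix.trace_mul_comm, ← mul_assoc]
  have h3 : (S * A * S).PosSemidef := by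
    have := hA.mul_mul_conjTranspose_same S
    rwa [hS.isHermitian.eq] at this
  rw [h2]; exact psd_trace_re_nonneg h3

lemma one_sub_psd_s2 {ρ : Matrix n n ℂ} (hρ : ρ.PosSemidef) (htr : ρ.trace = 1) :
    (1 - ρ).PosSemidef := by
  have hH := hρ.isHermitian
  obtain ⟨V, lam, hVu, hVu', hlam0, hspec⟩ :
      ∃ (V : Matrix n n ℂ) (lam : n → ℝ), V * Vᴴ = 1 ∧ Vᴴ * V = 1 ∧ (∀ i, 0 ≤ lam i) ∧
        ρ = V * Matrix.diagonal (fun i => (lam i : ℂ)) * Vᴴ := by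
    refine ⟨(hH.eigenvectorUnitary : Matrix n n ℂ), hH.eigenvalues, ?_, ?_,
      hρ.eigenvalues_nonneg, ?_⟩
    · rw [← Matrix.star_eq_conjTranspose]
      exact (Matrix.mem_unitaryGroup_iff).mp hH.eigenvectorUnitary.2
    · rw [← Matrix.star_eq_conjTranspose]
      exact (Matrix.mem_unitaryGroup_iff').mp hH.eigenvectorUnitary.2
    · have := hH.spectral_theorem
      rw [← Matrix.star_eq_conjTranspose]
      exact this
  -- sum of eigenvalues = 1
  have htr' : ∑ i, lam i = 1 := by
    have h2 : ρ.trace = ∑ i, (lam i : ℂ) := by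
      rw [hspec, Matrix.trace_mul_cycle, hVu', one_mul, Matrix.trace_diagonal]
    rw [htr] at h2
    exact_mod_cast h2.symm
  have hle : ∀ i, lam i ≤ 1 := by
    intro i
    calc lam i ≤ ∑ j, lam j :=
          Finset.single_le_sum (fun j _ => hlam0 j) (Finset.mem_univ i)
      _ = 1 := htr'
  have h1 : (1 : Matrix n n ℂ) - ρ
      = V * Matrix.diagonal (fun i => ((1 - lam i : ℝ) : ℂ)) * Vᴴ := by
    rw [hspec]
    have hone : (1 : Matrix n n ℂ) = V * 1 * Vᴴ := by rw [mul_one, hVu]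
    nth_rewrite 1 [hone]
    rw [← sub_mul, ← mul_sub, ← Matrix.diagonal_one, Matrix.diagonal_sub]
    congr 2
    funext i
    push_cast
    ring
  rw [h1]
  refine (Matrix.posSemidef_diagonal_iff.mpr fun i => ?_).mul_mul_conjTranspose_same V
  rw [Complex.zero_le_real]
  linarith [hle i]

lemma psd_trace_mul_le {A ρ : Matrix n n ℂ} (hA : A.PosSemidef)
    (hρ : ρ.PosSemidef) (htr : ρ.trace = 1) :
    (Matrix.trace (A * ρ)).re ≤ A.trace.re := by
  have h := psd_trace_mul_re_nonneg hA (one_sub_psd_s2 hρ htr)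
  have heq : A * (1 - ρ) = A - A * ρ := by rw [mul_sub, mul_one]
  rw [heq, Matrix.trace_sub, Complex.sub_re] at h
  linarith

end helpers

/-- Quantum memory bound: if a parameter `T` is encoded in density
matrices on a memory of `q` qubits (dimension `2^q`) and a (finitely additive)
POVM on ℝ locates `T` within an interval of size `δ` with probability at least
`P` for every `T` in the fiducial interval, then `2^q ≥ P (T_max − T_min)/δ − 1`;
equivalently `q ≥ log₂(P (T_max − T_min)/δ − 1)`. -/
theorem stmt_2 (q : ℕ)
    (ρ : ℝ → Matrix (Fin (2^q)) (Fin (2^q)) ℂ)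
    (hρpos : ∀ T, (ρ T).PosSemidef) (hρtr : ∀ T, (ρ T).trace = 1)
    (M : Set ℝ → Matrix (Fin (2^q)) (Fin (2^q)) ℂ)
    (hMpos : ∀ S, (M S).PosSemidef) (hMuniv : M Set.univ = 1)
    (hMadd : ∀ S S' : Set ℝ, Disjoint S S' → M (S ∪ S') = M S + M S')
    (Tmin Tmax : ℝ) (hT : Tmin < Tmax) (P : ℝ) (hP : P ∈ Set.Ioc (0:ℝ) 1)
    (δ : ℝ) (hδ : 0 < δ)
    (hacc : ∀ T ∈ Set.Icc Tmin Tmax,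
      P ≤ (Matrix.trace (M (Set.Ioo (T - δ/2) (T + δ/2)) * ρ T)).re) :
    P * (Tmax - Tmin) / δ - 1 ≤ (2^q : ℝ) ∧
    Real.logb 2 (P * (Tmax - Tmin) / δ - 1) ≤ (q : ℝ) := by
  obtain ⟨hP0, hP1⟩ := hP
  set s : ℝ := Tmax - Tmin with hs
  have hs0 : 0 < s := by simp [hs]; linarith
  set N : ℕ := ⌊s / δ⌋₊ + 1 with hN
  set f : ℕ → Set ℝ := fun k => Set.Ioo (Tmin + k * δ - δ/2) (Tmin + k * δ + δ/2) with hf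
  -- M ∅ = 0
  have hMempty : M ∅ = 0 := by
    have h := hMadd ∅ ∅ (disjoint_bot_left)
    rw [Set.union_empty] at h
    exact left_eq_add.mp h
  -- disjointness
  have hdisj : ∀ i j : ℕ, i ≠ j → Disjoint (f i) (f j) := by
    have key : ∀ i j : ℕ, i < j → Disjoint (f i) (f j) := by
      intro i j hij
      refine Set.disjoint_left.mpr fun x hx hx' => ?_
      simp only [hf, Set.mem_Ioo] at hx hx'
      have : (i:ℝ) + 1 ≤ j := by exact_mod_cast hij
      nlinarith [hx.1, hx.2, hx'.1, hx'.2]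
    intro i j hij
    rcases lt_or_gt_of_ne hij with h | h
    · exact key i j h
    · exact (key j i h).symm
  -- finite additivity over range
  have hMsum : ∀ m : ℕ, M (⋃ i ∈ Finset.range m, f i) = ∑ i ∈ Finset.range m, M (f i) := by
    intro m
    induction m with
    | zero => simpa using hMempty
    | succ m ih =>
      rw [Finset.range_add_one, Finset.sum_insert (by simp), Finset.set_biUnion_insert]
      rw [hMadd _ _ ?_, ih]
      exact Set.disjoint_iUnion₂_right.mpr fun i hi =>
        hdisj (m) i (by simp at hi; omega)
  -- each point is in the interval
  have hmem : ∀ k < N, Tmin + k * δ ∈ Set.Icc Tmin Tmax := by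
    intro k hk
    constructor
    · nlinarith [Nat.cast_nonneg (α := ℝ) k]
    · have hk' : (k:ℝ) ≤ ⌊s / δ⌋₊ := by exact_mod_cast Nat.lt_succ_iff.mp hk
      have : (⌊s / δ⌋₊ : ℝ) ≤ s / δ := Nat.floor_le (by positivity)
      have : (k:ℝ) * δ ≤ s := by
        calc (k:ℝ) * δ ≤ (s/δ) * δ := by nlinarith
          _ = s := by field_simp
      simp [hs] at this ⊢; linarith
  -- key chain
  have hkey : (N : ℝ) * P ≤ (2^q : ℝ) := by
    have hstep : ∀ k ∈ Finset.range N, P ≤ (Matrix.trace (M (f k))).re := by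
      intro k hk
      simp only [Finset.mem_range] at hk
      have h1 := hacc (Tmin + k * δ) (hmem k hk)
      have h2 := psd_trace_mul_le (hMpos (f k)) (hρpos (Tmin + k * δ)) (hρtr _)
      have : Set.Ioo (Tmin + k*δ - δ/2) (Tmin + k*δ + δ/2) = f k := rfl
      rw [this] at h1
      linarith
    have hsum1 : (N:ℝ) * P ≤ ∑ k ∈ Finset.range N, (Matrix.trace (M (f k))).re := by
      calc (N:ℝ) * P = ∑ _k ∈ Finset.range N, P := by
            rw [Finset.sum_const, Finset.card_range, nsmul_eq_mul]
        _ ≤ _ := Finset.sum_le_sum hstep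
    have hsum2 : ∑ k ∈ Finset.range N, (Matrix.trace (M (f k))).re
        ≤ (2^q : ℝ) := by
      have hU : (Set.univ : Set ℝ) = (⋃ i ∈ Finset.range N, f i)
          ∪ (⋃ i ∈ Finset.range N, f i)ᶜ := (Set.union_compl_self _).symm
      have hMU : M Set.univ = M (⋃ i ∈ Finset.range N, f i)
          + M ((⋃ i ∈ Finset.range N, f i)ᶜ) := by
        rw [hU]; exact hMadd _ _ disjoint_compl_right
      have htr1 : (Matrix.trace (M Set.univ)).re = (2^q : ℝ) := by
        rw [hMuniv, Matrix.trace_one, Complex.natCast_re]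
        simp only [Fintype.card_fin]
        push_cast
        ring
      have h0 := psd_trace_re_nonneg (hMpos ((⋃ i ∈ Finset.range N, f i)ᶜ))
      have hsum3 : (Matrix.trace (M (⋃ i ∈ Finset.range N, f i))).re
          = ∑ k ∈ Finset.range N, (Matrix.trace (M (f k))).re := by
        rw [hMsum N, Matrix.trace_sum, Complex.re_sum]
      have : (Matrix.trace (M Set.univ)).re
          = (Matrix.trace (M (⋃ i ∈ Finset.range N, f i))).re
            + (Matrix.trace (M ((⋃ i ∈ Finset.range N, f i)ᶜ))).re := by
        rw [hMU, Matrix.trace_add, Complex.add_re]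
      rw [htr1, hsum3] at this
      linarith
    linarith
  have hmain : P * s / δ ≤ (2^q : ℝ) := by
    have hlt : s / δ < N := by
      rw [hN]
      push_cast
      exact Nat.lt_floor_add_one _
    have : P * (s/δ) ≤ P * N := by nlinarith
    calc P * s / δ = P * (s/δ) := by ring
      _ ≤ P * N := this
      _ = N * P := mul_comm _ _
      _ ≤ _ := hkey
  have h1 : P * (Tmax - Tmin) / δ - 1 ≤ (2^q : ℝ) := by
    rw [← hs]; linarith
  refine ⟨h1, ?_⟩
  set x : ℝ := P * (Tmax - Tmin) / δ - 1 with hx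
  have hxgt : -1 < x := by
    have : 0 < P * (Tmax - Tmin) / δ := by rw [← hs]; positivity
    simp only [hx]; linarith
  rcases le_or_gt x 0 with hx0 | hx0
  · have hle0 : Real.logb 2 x ≤ 0 := by
      rcases eq_or_lt_of_le hx0 with h | h
      · simp [h, Real.logb]
      · have heq : Real.logb 2 x = Real.logb 2 (-x) := by
          rw [Real.logb, Real.logb, Real.log_neg_eq_log]
        rw [heq]
        have hA : (0:ℝ) ≤ -x := by linarith
        have hB : -x ≤ 1 := by linarith
        exact Real.logb_nonpos one_lt_two hA hB
    exact hle0.trans (Nat.cast_nonneg q)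
  · have hxle : x ≤ (2:ℝ)^q := by rw [hx]; exact h1
    have h2 : Real.logb 2 x ≤ Real.logb 2 ((2:ℝ)^q) :=
      Real.logb_le_logb_of_le one_lt_two hx0 hxle
    have h3 : Real.logb 2 ((2:ℝ)^q) = (q : ℝ) := by
      rw [show ((2:ℝ)^q) = (2:ℝ) ^ (q:ℝ) by rw [Real.rpow_natCast]]
      exact Real.logb_rpow (by norm_num) (by norm_num)
    linarith
end

section
/- (Mixing increases the inaccuracy.) Let ι be a nonempty finite index set, w : ι → ℝ nonnegative weights with Σᵢ wᵢ = 1, and for each i a nondecreasing function Fᵢ : [0,∞) → ℝ (the probability, under the i-th state, that a covariant measurement outcome falls within an interval of size δ around the true value). Fix P ∈ ℝ and assume that for each i there exists δ ≥ 0 with Fᵢ(δ) ≥ P. Define δᵢ = inf{δ ≥ 0 : Fᵢ(δ) ≥ P} and δ_mix = inf{δ ≥ 0 : Σᵢ wᵢ Fᵢ(δ) ≥ P}. Then δ_mix ≥ minᵢ δᵢ. -/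
/-- Mixing increases the inaccuracy: for a covariant measurement
on a mixture `ρ = Σᵢ wᵢ ρᵢ`, the inaccuracy of the mixture is at least the
minimum of the inaccuracies of the components. Here `F i δ` is the probability,
under the `i`-th state, that the outcome falls in an interval of size `δ`
around the true value, assumed nondecreasing in `δ ≥ 0`. -/
theorem stmt_3 {ι : Type*} [Fintype ι] [Nonempty ι]
    (w : ι → ℝ) (hw : ∀ i, 0 ≤ w i) (hwsum : ∑ i, w i = 1)
    (F : ι → ℝ → ℝ)
    (hmono : ∀ i, ∀ a b : ℝ, 0 ≤ a → a ≤ b → F i a ≤ F i b)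
    (P : ℝ) (hex : ∀ i, ∃ δ : ℝ, 0 ≤ δ ∧ P ≤ F i δ) :
    Finset.univ.inf' Finset.univ_nonempty
        (fun i => sInf {δ : ℝ | 0 ≤ δ ∧ P ≤ F i δ})
      ≤ sInf {δ : ℝ | 0 ≤ δ ∧ P ≤ ∑ i, w i * F i δ} := by
  choose d hd0 hdP using hex
  -- the mixture set is nonempty: take the max of the d i
  set D : ℝ := Finset.univ.sup' Finset.univ_nonempty d with hD
  have hD0 : 0 ≤ D := le_trans (hd0 (Classical.arbitrary ι))
    (Finset.le_sup' d (Finset.mem_univ _))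
  have hDmem : D ∈ {δ : ℝ | 0 ≤ δ ∧ P ≤ ∑ i, w i * F i δ} := by
    refine ⟨hD0, ?_⟩
    calc P = ∑ i, w i * P := by rw [← Finset.sum_mul, hwsum, one_mul]
    _ ≤ ∑ i, w i * F i D := by
        apply Finset.sum_le_sum
        intro i _
        exact mul_le_mul_of_nonneg_left
          (le_trans (hdP i) (hmono i (d i) D (hd0 i)
            (Finset.le_sup' d (Finset.mem_univ i)))) (hw i)
  refine le_csInf ⟨D, hDmem⟩ ?_
  rintro δ ⟨hδ0, hδP⟩
  -- there must exist i with P ≤ F i δ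
  have : ∃ i, P ≤ F i δ := by
    by_contra h
    push_neg at h
    have hlt : ∑ i, w i * F i δ < ∑ i, w i * P := by
      have hne : ∃ i, 0 < w i := by
        by_contra hc
        push_neg at hc
        have : ∑ i, w i = 0 := Finset.sum_eq_zero fun i _ =>
          le_antisymm (hc i) (hw i)
        simp [this] at hwsum
      obtain ⟨j, hj⟩ := hne
      apply Finset.sum_lt_sum
      · exact fun i _ => mul_le_mul_of_nonneg_left (h i).le (hw i)
      · exact ⟨j, Finset.mem_univ j, by
          exact mul_lt_mul_of_pos_left (h j) hj⟩
    rw [← Finset.sum_mul, hwsum, one_mul] at hlt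
    exact absurd hδP (not_le.mpr hlt)
  obtain ⟨i, hi⟩ := this
  have hbdd : BddBelow {x : ℝ | 0 ≤ x ∧ P ≤ F i x} := ⟨0, fun x hx => hx.1⟩
  calc Finset.univ.inf' Finset.univ_nonempty
        (fun i => sInf {δ : ℝ | 0 ≤ δ ∧ P ≤ F i δ})
      ≤ sInf {x : ℝ | 0 ≤ x ∧ P ≤ F i x} :=
        Finset.inf'_le _ (Finset.mem_univ i)
    _ ≤ δ := csInf_le hbdd ⟨hδ0, hi⟩
end

section
/- (Inner-product bound for rotated symmetric basis vectors.) Let J ≥ 1 be a natural number, s ∈ (0,1), and let m, k be integers with −J ≤ m ≤ J and −J ≤ k ≤ J. Then the inner product between the rotated symmetric vector |J,m⟩_s and the standard symmetric vector |J,k⟩ in (ℂ²)^{⊗2J} satisfies: if s ≥ 1/2, |⟨J,m|_s |J,k⟩| ≤ √( C(2J, J+k) · C(2J, J−m) · s^{2J+k−m} · (1−s)^{m−k} ), and if s < 1/2, |⟨J,m|_s |J,k⟩| ≤ √( C(2J, J+k) · C(2J, J−m) · s^{m+k} · (1−s)^{2J−m−k} ), where C(·,·) denotes the binomial coefficient and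 the real exponents are interpreted via the real power function. -/
open scoped BigOperators

/-- The tensor product `v 0 ⊗ v 1 ⊗ ⋯ ⊗ v (m-1)` of a family of vectors in ℂ²,
realized in coordinates: the component at `x : Fin m → Fin 2` is `∏ i, v i (x i)`. -/
noncomputable def tensorVec {m : ℕ} (v : Fin m → Fin 2 → ℂ) :
    EuclideanSpace ℂ (Fin m → Fin 2) :=
  WithLp.toLp 2 (fun x => ∏ i, v i (x i))

/-- The (normalized) symmetrization of `u^{⊗k} ⊗ w^{⊗(n-k)}`:
`(1/√(n!·k!·(n−k)!)) Σ_{π ∈ S_n} V_π (u^{⊗k} ⊗ w^{⊗(n-k)})`. -/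
noncomputable def symVec (n k : ℕ) (u w : Fin 2 → ℂ) :
    EuclideanSpace ℂ (Fin n → Fin 2) :=
  ((Real.sqrt ((n.factorial : ℝ) * k.factorial * (n - k).factorial) : ℂ))⁻¹ •
    ∑ π : Equiv.Perm (Fin n), tensorVec (fun i => if ((π i : ℕ) < k) then u else w)

/-- `|φ₀⟩ = √s |0⟩ + √(1−s) |1⟩`. -/
noncomputable def phi0 (s : ℝ) : Fin 2 → ℂ :=
  ![(Real.sqrt s : ℂ), (Real.sqrt (1 - s) : ℂ)]

/-- `|φ₀⊥⟩ = √(1−s) |0⟩ − √s |1⟩`. -/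
noncomputable def phi0perp (s : ℝ) : Fin 2 → ℂ :=
  ![(Real.sqrt (1 - s) : ℂ), -(Real.sqrt s : ℂ)]

/-- The standard basis vector `|0⟩` of ℂ². -/
noncomputable def e0 : Fin 2 → ℂ := ![1, 0]

/-- The standard basis vector `|1⟩` of ℂ². -/
noncomputable def e1 : Fin 2 → ℂ := ![0, 1]

/-- The rotated symmetric basis vector `|J,m⟩_s`, the normalized symmetrization
of `|φ₀⟩^{⊗(J+m)} ⊗ |φ₀⊥⟩^{⊗(J−m)}` in `(ℂ²)^{⊗2J}`. -/
noncomputable def rotSym (J : ℕ) (s : ℝ) (m : ℤ) :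
    EuclideanSpace ℂ (Fin (2*J) → Fin 2) :=
  symVec (2*J) (((J : ℤ) + m).toNat) (phi0 s) (phi0perp s)

/-- The standard symmetric basis vector `|J,k⟩`, the normalized symmetrization
of `|0⟩^{⊗(J+k)} ⊗ |1⟩^{⊗(J−k)}` in `(ℂ²)^{⊗2J}`. -/
noncomputable def stdSym (J : ℕ) (k : ℤ) :
    EuclideanSpace ℂ (Fin (2*J) → Fin 2) :=
  symVec (2*J) (((J : ℤ) + k).toNat) e0 e1
open Finset

lemma card_filter_lt_perm {n a : ℕ} (ha : a ≤ n) (π : Equiv.Perm (Fin n)) :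
    (univ.filter fun i : Fin n => (π i : ℕ) < a).card = a := by
  have h1 : (univ.filter fun i : Fin n => (π i : ℕ) < a).card
      = (univ.filter fun j : Fin n => (j : ℕ) < a).card := by
    apply Finset.card_bij (fun i _ => π i)
    · intro i hi; simpa using (Finset.mem_filter.mp hi).2
    · intro i _ j _ hij; exact π.injective hij
    · intro j hj
      refine ⟨π.symm j, ?_, by simp⟩
      simp only [Finset.mem_filter, Finset.mem_univ, true_and, Equiv.apply_symm_apply]
      simpa using (Finset.mem_filter.mp hj).2
  rw [h1]
  rcases eq_or_lt_of_le ha with h | h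
  · subst h; simp [Finset.filter_true_of_mem, Fin.is_lt]
  · have : (univ.filter fun j : Fin n => (j : ℕ) < a) = Finset.Iio ⟨a, h⟩ := by
      ext j; simp [Fin.lt_def]
    rw [this, Fin.card_Iio]

lemma inner_tensorVec {n : ℕ} (v w : Fin n → Fin 2 → ℂ) :
    (inner ℂ (tensorVec v) (tensorVec w) : ℂ)
      = ∏ i, ((starRingEnd ℂ) (v i 0) * w i 0 + (starRingEnd ℂ) (v i 1) * w i 1) := by
  have h1 : (inner ℂ (tensorVec v) (tensorVec w) : ℂ)
      = ∑ x : Fin n → Fin 2, ∏ i, ((starRingEnd ℂ) (v i (x i)) * w i (x i)) := by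
    simp [tensorVec, PiLp.inner_apply, RCLike.inner_apply, map_prod,
      Finset.prod_mul_distrib, mul_comm]
  rw [h1, ← Fintype.prod_sum (fun (i : Fin n) (j : Fin 2) => (starRingEnd ℂ) (v i j) * w i j)]
  exact Finset.prod_congr rfl fun i _ => by rw [Fin.sum_univ_two]
lemma norm_term {n : ℕ} (s : ℝ) (hs0 : 0 ≤ s) (hs1 : s ≤ 1) (a k : ℕ)
    (π σ : Equiv.Perm (Fin n)) :
    ‖(inner ℂ (tensorVec fun i => if ((π i : ℕ) < a) then phi0 s else phi0perp s)
        (tensorVec fun i => if ((σ i : ℕ) < k) then e0 else e1) : ℂ)‖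
      = ∏ i, (if (((π i : ℕ) < a) ↔ ((σ i : ℕ) < k)) then Real.sqrt s
          else Real.sqrt (1 - s)) := by
  rw [inner_tensorVec, norm_prod]
  apply Finset.prod_congr rfl
  intro i _
  have h1 : (0:ℝ) ≤ 1 - s := by linarith
  by_cases hp : (π i : ℕ) < a <;> by_cases hq : (σ i : ℕ) < k <;>
    simp [hp, hq, phi0, phi0perp, e0, e1, Complex.norm_real,
      abs_of_nonneg, Real.sqrt_nonneg]

lemma prod_ite_pow {n : ℕ} (p : Fin n → Prop) [DecidablePred p] (x y : ℝ) :
    ∏ i, (if p i then x else y)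
      = x ^ (n - (Finset.univ.filter fun i => ¬ p i).card)
        * y ^ (Finset.univ.filter fun i => ¬ p i).card := by
  rw [Finset.prod_ite, Finset.prod_const, Finset.prod_const]
  congr 2
  have h := Finset.card_filter_add_card_filter_not (s := Finset.univ) (p := p)
  simp only [Finset.card_univ, Fintype.card_fin] at h
  show (Finset.filter p Finset.univ).card
      = n - (Finset.filter (fun a => ¬ p a) Finset.univ).card
  omega

lemma sqrt_pow_eq_rpow (s : ℝ) (hs0 : 0 ≤ s) (m : ℕ) :
    Real.sqrt s ^ m = s ^ ((m : ℝ)/2) := by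
  rw [Real.sqrt_eq_rpow, ← Real.rpow_natCast (s ^ ((1:ℝ)/2)) m, ← Real.rpow_mul hs0]
  congr 1
  ring

lemma pow_bound_ge (s : ℝ) (hs0 : 0 < s) (hs1 : s < 1) (hs : 1/2 ≤ s)
    (n d : ℕ) (hd : d ≤ n) (r : ℝ) (hr : r ≤ d) :
    Real.sqrt s ^ (n - d) * Real.sqrt (1 - s) ^ d
      ≤ s ^ (((n:ℝ) - r)/2) * (1 - s) ^ (r/2) := by
  have h1s : (0:ℝ) < 1 - s := by linarith
  have key : ∀ y : ℝ, s ^ (((n:ℝ) - y)/2) * (1 - s) ^ (y/2)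
      = s ^ ((n:ℝ)/2) * ((1-s)/s) ^ (y/2) := by
    intro y
    rw [Real.div_rpow h1s.le hs0.le,
      show ((n:ℝ) - y)/2 = (n:ℝ)/2 - y/2 by ring, Real.rpow_sub hs0]
    field_simp
  have hL : Real.sqrt s ^ (n - d) * Real.sqrt (1 - s) ^ d
      = s ^ (((n:ℝ) - (d:ℝ))/2) * (1 - s) ^ ((d:ℝ)/2) := by
    rw [sqrt_pow_eq_rpow s hs0.le, sqrt_pow_eq_rpow (1-s) h1s.le, Nat.cast_sub hd]
  rw [hL, key, key]
  apply mul_le_mul_of_nonneg_left _ (Real.rpow_nonneg hs0.le _)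
  apply Real.rpow_le_rpow_of_exponent_ge (by positivity)
  · rw [div_le_one hs0]; linarith
  · linarith

lemma pow_bound_lt (s : ℝ) (hs0 : 0 < s) (hs1 : s < 1) (hs : s < 1/2)
    (n d : ℕ) (hd : d ≤ n) (r : ℝ) (hr : r ≤ (n:ℝ) - d) :
    Real.sqrt s ^ (n - d) * Real.sqrt (1 - s) ^ d
      ≤ s ^ (r/2) * (1 - s) ^ (((n:ℝ) - r)/2) := by
  have h1s : (0:ℝ) < 1 - s := by linarith
  have key : ∀ y : ℝ, s ^ (y/2) * (1 - s) ^ (((n:ℝ) - y)/2)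
      = (1 - s) ^ ((n:ℝ)/2) * (s/(1-s)) ^ (y/2) := by
    intro y
    rw [Real.div_rpow hs0.le h1s.le,
      show ((n:ℝ) - y)/2 = (n:ℝ)/2 - y/2 by ring, Real.rpow_sub h1s]
    field_simp
  have hL : Real.sqrt s ^ (n - d) * Real.sqrt (1 - s) ^ d
      = s ^ (((n:ℝ) - (d:ℝ))/2) * (1 - s) ^ ((d:ℝ)/2) := by
    rw [sqrt_pow_eq_rpow s hs0.le, sqrt_pow_eq_rpow (1-s) h1s.le, Nat.cast_sub hd]
  have hL2 : s ^ (((n:ℝ) - (d:ℝ))/2) * (1 - s) ^ ((d:ℝ)/2)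
      = s ^ (((n:ℝ) - d)/2) * (1 - s) ^ (((n:ℝ) - ((n:ℝ) - d))/2) := by
    norm_num
  rw [hL, hL2, key, key]
  apply mul_le_mul_of_nonneg_left _ (Real.rpow_nonneg h1s.le _)
  apply Real.rpow_le_rpow_of_exponent_ge (by positivity)
  · rw [div_le_one h1s]; linarith
  · linarith
lemma main_bound (n a k : ℕ) (ha : a ≤ n) (hk : k ≤ n) (s : ℝ)
    (hs0 : 0 < s) (hs1 : s < 1) (M : ℝ)
    (hM : ∀ d : ℕ, d ≤ n → a ≤ k + d → d + a + k ≤ 2*n →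
       Real.sqrt s ^ (n - d) * Real.sqrt (1 - s) ^ d ≤ M) :
    ‖(inner ℂ (symVec n a (phi0 s) (phi0perp s)) (symVec n k e0 e1) : ℂ)‖ ≤
      Real.sqrt ((n.choose a : ℝ) * (n.choose k : ℝ)) * M := by
  classical
  set ca : ℝ := Real.sqrt ((n.factorial : ℝ) * a.factorial * (n - a).factorial) with hca
  set ck : ℝ := Real.sqrt ((n.factorial : ℝ) * k.factorial * (n - k).factorial) with hck
  have hcapos : 0 < ca := Real.sqrt_pos.mpr (by positivity)
  have hckpos : 0 < ck := Real.sqrt_pos.mpr (by positivity)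
  have hterm : ∀ π σ : Equiv.Perm (Fin n),
      ‖(inner ℂ (tensorVec fun i => if ((π i : ℕ) < a) then phi0 s else phi0perp s)
        (tensorVec fun i => if ((σ i : ℕ) < k) then e0 else e1) : ℂ)‖ ≤ M := by
    intro π σ
    rw [norm_term s hs0.le hs1.le a k π σ,
      prod_ite_pow (fun i => ((π i : ℕ) < a) ↔ ((σ i : ℕ) < k))]
    set D := Finset.univ.filter
      (fun i : Fin n => ¬(((π i : ℕ) < a) ↔ ((σ i : ℕ) < k))) with hD
    set A := Finset.univ.filter (fun i : Fin n => (π i : ℕ) < a) with hA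
    set B := Finset.univ.filter (fun i : Fin n => (σ i : ℕ) < k) with hB
    have hAcard : A.card = a := card_filter_lt_perm ha π
    have hBcard : B.card = k := card_filter_lt_perm hk σ
    have hdn : D.card ≤ n := by
      simpa using Finset.card_filter_le Finset.univ
        (fun i : Fin n => ¬(((π i : ℕ) < a) ↔ ((σ i : ℕ) < k)))
    have h1 : a ≤ k + D.card := by
      have hsub : A ⊆ B ∪ D := by
        intro i hi
        by_cases hiD : i ∈ D
        · exact Finset.mem_union_right _ hiD
        · apply Finset.mem_union_left
          simp only [hD, Finset.mem_filter, Finset.mem_univ, true_and, not_not] at hiD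
          simp only [hA, Finset.mem_filter, Finset.mem_univ, true_and] at hi
          simp only [hB, Finset.mem_filter, Finset.mem_univ, true_and]
          exact hiD.mp hi
      calc a = A.card := hAcard.symm
        _ ≤ (B ∪ D).card := Finset.card_le_card hsub
        _ ≤ B.card + D.card := Finset.card_union_le _ _
        _ = k + D.card := by rw [hBcard]
    have h2 : D.card + a + k ≤ 2*n := by
      have hsub : D ⊆ (Finset.univ \ A) ∪ (Finset.univ \ B) := by
        intro i hi
        simp only [hD, Finset.mem_filter, Finset.mem_univ, true_and] at hi
        simp only [Finset.mem_union, Finset.mem_sdiff, Finset.mem_univ, true_and,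
          hA, hB, Finset.mem_filter]
        tauto
      have hle := Finset.card_le_card hsub
      have h3 := Finset.card_union_le (Finset.univ \ A) (Finset.univ \ B)
      have h4 : (Finset.univ \ A).card = n - a := by
        rw [Finset.card_sdiff_of_subset (Finset.subset_univ _), hAcard, Finset.card_univ,
          Fintype.card_fin]
      have h5 : (Finset.univ \ B).card = n - k := by
        rw [Finset.card_sdiff_of_subset (Finset.subset_univ _), hBcard, Finset.card_univ,
          Fintype.card_fin]
      omega
    exact hM D.card hdn h1 h2
  have hinner : ‖(inner ℂ (symVec n a (phi0 s) (phi0perp s)) (symVec n k e0 e1) : ℂ)‖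
      = ca⁻¹ * ck⁻¹ * ‖∑ π : Equiv.Perm (Fin n), ∑ σ : Equiv.Perm (Fin n),
          (inner ℂ (tensorVec fun i => if ((π i : ℕ) < a) then phi0 s else phi0perp s)
            (tensorVec fun i => if ((σ i : ℕ) < k) then e0 else e1) : ℂ)‖ := by
    have hnorm : ∀ r : ℝ, 0 ≤ r → ‖((r : ℂ))⁻¹‖ = r⁻¹ := fun r hr => by
      rw [norm_inv, Complex.norm_real, Real.norm_eq_abs, abs_of_nonneg hr]
    rw [symVec, symVec, inner_smul_left, inner_smul_right, sum_inner]
    simp_rw [inner_sum]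
    rw [norm_mul, norm_mul, map_inv₀, Complex.conj_ofReal,
      hnorm _ (Real.sqrt_nonneg _), hnorm _ (Real.sqrt_nonneg _), ← mul_assoc]
  rw [hinner]
  have hsum : ‖∑ π : Equiv.Perm (Fin n), ∑ σ : Equiv.Perm (Fin n),
          (inner ℂ (tensorVec fun i => if ((π i : ℕ) < a) then phi0 s else phi0perp s)
            (tensorVec fun i => if ((σ i : ℕ) < k) then e0 else e1) : ℂ)‖
      ≤ (n.factorial : ℝ)^2 * M := by
    calc ‖∑ π : Equiv.Perm (Fin n), ∑ σ : Equiv.Perm (Fin n),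
          (inner ℂ (tensorVec fun i => if ((π i : ℕ) < a) then phi0 s else phi0perp s)
            (tensorVec fun i => if ((σ i : ℕ) < k) then e0 else e1) : ℂ)‖
        ≤ ∑ π : Equiv.Perm (Fin n), ‖∑ σ : Equiv.Perm (Fin n),
          (inner ℂ (tensorVec fun i => if ((π i : ℕ) < a) then phi0 s else phi0perp s)
            (tensorVec fun i => if ((σ i : ℕ) < k) then e0 else e1) : ℂ)‖ :=
          norm_sum_le _ _
      _ ≤ ∑ π : Equiv.Perm (Fin n), ∑ σ : Equiv.Perm (Fin n),
          ‖(inner ℂ (tensorVec fun i => if ((π i : ℕ) < a) then phi0 s else phi0perp s)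
            (tensorVec fun i => if ((σ i : ℕ) < k) then e0 else e1) : ℂ)‖ :=
          Finset.sum_le_sum (fun π _ => norm_sum_le _ _)
      _ ≤ ∑ _π : Equiv.Perm (Fin n), ∑ _σ : Equiv.Perm (Fin n), M :=
          Finset.sum_le_sum (fun π _ => Finset.sum_le_sum fun σ _ => hterm π σ)
      _ = (n.factorial : ℝ)^2 * M := by
          simp only [Finset.sum_const, Finset.card_univ, Fintype.card_perm,
            Fintype.card_fin, nsmul_eq_mul]
          ring
  have h1 : (n.choose a : ℝ) * a.factorial * (n-a).factorial = n.factorial := by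
    exact_mod_cast Nat.choose_mul_factorial_mul_factorial ha
  have h2 : (n.choose k : ℝ) * k.factorial * (n-k).factorial = n.factorial := by
    exact_mod_cast Nat.choose_mul_factorial_mul_factorial hk
  have hsq : Real.sqrt ((n.choose a : ℝ) * (n.choose k : ℝ)) * (ca * ck)
      = (n.factorial : ℝ)^2 := by
    rw [hca, hck, ← Real.sqrt_mul (by positivity), ← Real.sqrt_mul (by positivity)]
    rw [show (n.choose a : ℝ) * (n.choose k : ℝ)
        * ((n.factorial : ℝ) * a.factorial * (n-a).factorial
            * ((n.factorial : ℝ) * k.factorial * (n-k).factorial))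
        = (((n.factorial : ℝ))^2)^2 from by
      linear_combination ((n.factorial:ℝ)^2 * (n.choose k) * k.factorial
        * (n-k).factorial) * h1 + ((n.factorial:ℝ)^3) * h2]
    exact Real.sqrt_sq (by positivity)
  have hpref : ca⁻¹ * ck⁻¹ * ((n.factorial : ℝ)^2)
      = Real.sqrt ((n.choose a : ℝ) * (n.choose k : ℝ)) := by
    have h3 : Real.sqrt ((n.choose a : ℝ) * (n.choose k : ℝ))
        = (n.factorial : ℝ)^2 / (ca * ck) := (eq_div_iff (by positivity)).mpr hsq
    rw [h3]
    field_simp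
  calc ca⁻¹ * ck⁻¹ * ‖∑ π : Equiv.Perm (Fin n), ∑ σ : Equiv.Perm (Fin n),
          (inner ℂ (tensorVec fun i => if ((π i : ℕ) < a) then phi0 s else phi0perp s)
            (tensorVec fun i => if ((σ i : ℕ) < k) then e0 else e1) : ℂ)‖
      ≤ ca⁻¹ * ck⁻¹ * ((n.factorial : ℝ)^2 * M) := by
        apply mul_le_mul_of_nonneg_left hsum (by positivity)
    _ = Real.sqrt ((n.choose a : ℝ) * (n.choose k : ℝ)) * M := by
        rw [← hpref]; ring
lemma sqrt_rpow' (s : ℝ) (hs : 0 ≤ s) (x : ℝ) :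
    Real.sqrt (s ^ x) = s ^ (x/2) := by
  rw [Real.sqrt_eq_rpow, ← Real.rpow_mul hs]
  congr 1
  ring

/-- Inner-product bound for rotated symmetric basis vectors. -/
theorem stmt_5 (J : ℕ) (hJ : 1 ≤ J) (s : ℝ) (hs : s ∈ Set.Ioo (0:ℝ) 1)
    (m k : ℤ) (hm₁ : -(J:ℤ) ≤ m) (hm₂ : m ≤ (J:ℤ))
    (hk₁ : -(J:ℤ) ≤ k) (hk₂ : k ≤ (J:ℤ)) :
    ((1:ℝ)/2 ≤ s →
      ‖(inner ℂ (rotSym J s m) (stdSym J k) : ℂ)‖ ≤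
        Real.sqrt ((((2*J).choose (((J:ℤ)+k).toNat) : ℝ))
          * (((2*J).choose (((J:ℤ)-m).toNat) : ℝ))
          * s ^ ((2*(J:ℝ)) + (k:ℝ) - (m:ℝ)) * (1 - s) ^ ((m:ℝ) - (k:ℝ)))) ∧
    (s < (1:ℝ)/2 →
      ‖(inner ℂ (rotSym J s m) (stdSym J k) : ℂ)‖ ≤
        Real.sqrt ((((2*J).choose (((J:ℤ)+k).toNat) : ℝ))
          * (((2*J).choose (((J:ℤ)-m).toNat) : ℝ))
          * s ^ ((m:ℝ) + (k:ℝ)) * (1 - s) ^ ((2*(J:ℝ)) - (m:ℝ) - (k:ℝ)))) := by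
  obtain ⟨hs0, hs1⟩ := hs
  have h1s : (0:ℝ) < 1 - s := by linarith
  have ha : (((J:ℤ)+m).toNat) ≤ 2*J := by omega
  have hk' : (((J:ℤ)+k).toNat) ≤ 2*J := by omega
  have hsymm : (2*J).choose (((J:ℤ)-m).toNat) = (2*J).choose (((J:ℤ)+m).toNat) := by
    have h : ((J:ℤ)-m).toNat = 2*J - ((J:ℤ)+m).toNat := by omega
    rw [h, Nat.choose_symm ha]
  constructor
  · -- case s ≥ 1/2
    intro hhalf
    set r : ℝ := (m:ℝ) - (k:ℝ) with hr
    have hbound := main_bound (2*J) (((J:ℤ)+m).toNat) (((J:ℤ)+k).toNat) ha hk' s hs0 hs1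
      (s ^ ((((2*J:ℕ):ℝ) - r)/2) * (1-s) ^ (r/2))
      (by
        intro d hd h1 h2
        apply pow_bound_ge s hs0 hs1 hhalf (2*J) d hd r
        have hz : m - k ≤ (d:ℤ) := by omega
        rw [hr]
        exact_mod_cast hz)
    rw [hsymm]
    have hE : Real.sqrt ((((2*J).choose (((J:ℤ)+k).toNat) : ℝ))
          * (((2*J).choose (((J:ℤ)+m).toNat) : ℝ))
          * s ^ ((2*(J:ℝ)) + (k:ℝ) - (m:ℝ)) * (1 - s) ^ ((m:ℝ) - (k:ℝ)))
        = Real.sqrt ((((2*J).choose (((J:ℤ)+m).toNat) : ℝ))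
            * (((2*J).choose (((J:ℤ)+k).toNat) : ℝ)))
          * (s ^ ((((2*J:ℕ):ℝ) - r)/2) * (1-s) ^ (r/2)) := by
      rw [Real.sqrt_mul (by positivity), Real.sqrt_mul (by positivity),
        sqrt_rpow' s hs0.le, sqrt_rpow' (1-s) h1s.le,
        mul_comm (((2*J).choose (((J:ℤ)+k).toNat) : ℝ)),
        show ((2*(J:ℝ)) + (k:ℝ) - (m:ℝ))/2 = (((2*J:ℕ):ℝ) - r)/2 by push_cast; ring,
        show ((m:ℝ) - (k:ℝ))/2 = r/2 by rw [hr]]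
      ring
    rw [hE]
    exact hbound
  · -- case s < 1/2
    intro hhalf
    set r : ℝ := (m:ℝ) + (k:ℝ) with hr
    have hbound := main_bound (2*J) (((J:ℤ)+m).toNat) (((J:ℤ)+k).toNat) ha hk' s hs0 hs1
      (s ^ (r/2) * (1-s) ^ ((((2*J:ℕ):ℝ) - r)/2))
      (by
        intro d hd h1 h2
        apply pow_bound_lt s hs0 hs1 hhalf (2*J) d hd r
        have hz : m + k ≤ ((2*J : ℕ):ℤ) - (d:ℤ) := by push_cast; omega
        rw [hr]
        exact_mod_cast hz)
    rw [hsymm]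
    have hE : Real.sqrt ((((2*J).choose (((J:ℤ)+k).toNat) : ℝ))
          * (((2*J).choose (((J:ℤ)+m).toNat) : ℝ))
          * s ^ ((m:ℝ) + (k:ℝ)) * (1 - s) ^ ((2*(J:ℝ)) - (m:ℝ) - (k:ℝ)))
        = Real.sqrt ((((2*J).choose (((J:ℤ)+m).toNat) : ℝ))
            * (((2*J).choose (((J:ℤ)+k).toNat) : ℝ)))
          * (s ^ (r/2) * (1-s) ^ ((((2*J:ℕ):ℝ) - r)/2)) := by
      rw [Real.sqrt_mul (by positivity), Real.sqrt_mul (by positivity),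
        sqrt_rpow' s hs0.le, sqrt_rpow' (1-s) h1s.le,
        mul_comm (((2*J).choose (((J:ℤ)+k).toNat) : ℝ)),
        show ((m:ℝ) + (k:ℝ))/2 = r/2 by rw [hr],
        show ((2*(J:ℝ)) - (m:ℝ) - (k:ℝ))/2 = (((2*J:ℕ):ℝ) - r)/2 by push_cast; ring]
      ring
    rw [hE]
    exact hbound
end

section
/- (Fisher information of the local clock measurement, fixed purity.) For every real a with 0 ≤ a < 1, (1/(2π)) ∫₀^{2π} a² sin²τ / (1 + a cos τ) dτ = 1 − √(1 − a²). In particular, for the outcome distribution P_{T,p}(τ) = (1/(2π))(1 + (2p−1)cos(τ−T)) with p ∈ (1/2, 1), the classical Fisher information with respect to T equals 1 − √(1 − (2p−1)²) = 1 − 2√(p(1−p)). -/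
open Real intervalIntegral

lemma key_deriv (a : ℝ) (ha0 : 0 ≤ a) (ha1 : a < 1) (τ : ℝ) :
    HasDerivAt (fun x : ℝ => x - a * Real.sin x - Real.sqrt (1 - a^2) * x
        + 2 * Real.sqrt (1 - a^2) *
          Real.arctan (a * Real.sin x / (1 + Real.sqrt (1 - a^2) + a * Real.cos x)))
      (a^2 * (Real.sin τ)^2 / (1 + a * Real.cos τ)) τ := by
  set b := Real.sqrt (1 - a^2) with hbdef
  have hb2 : b^2 = 1 - a^2 := Real.sq_sqrt (by nlinarith)
  have hbpos : 0 < b := Real.sqrt_pos.mpr (by nlinarith)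
  have hden : 0 < 1 + a * Real.cos τ := by nlinarith [Real.neg_one_le_cos τ]
  have hD : 0 < 1 + b + a * Real.cos τ := by nlinarith [Real.neg_one_le_cos τ]
  have h1 : HasDerivAt (fun x : ℝ => a * Real.sin x) (a * Real.cos τ) τ :=
    (Real.hasDerivAt_sin τ).const_mul a
  have h2 : HasDerivAt (fun x : ℝ => 1 + b + a * Real.cos x) (a * (-Real.sin τ)) τ :=
    ((Real.hasDerivAt_cos τ).const_mul a).const_add (1 + b)
  have hu := h1.div h2 hD.ne'
  have harc := hu.arctan
  have hG := (((hasDerivAt_id τ).sub h1).sub ((hasDerivAt_id τ).const_mul b)).add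
      (harc.const_mul (2 * b))
  refine hG.congr_deriv ?_
  symm
  simp only [Pi.div_apply]
  set s := Real.sin τ
  set c := Real.cos τ
  have hsc : s^2 + c^2 = 1 := Real.sin_sq_add_cos_sq τ
  have hbne : (1 : ℝ) + b ≠ 0 := by positivity
  have e1 : (1+b+a*c)^2 + (a*s)^2 = 2*(1+b)*(1+a*c) := by
    linear_combination hb2 + a^2*hsc
  have e2 : a*c*(1+b+a*c) + a*s*(a*s) = a*(c*(1+b)+a) := by
    linear_combination a^2*hsc
  have harcval : 1/(1 + (a*s/(1+b+a*c))^2)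
        * ((a*c*(1+b+a*c) - a*s*(a*(-s)))/(1+b+a*c)^2)
      = (a*c*(1+b+a*c) + a*s*(a*s)) / ((1+b+a*c)^2 + (a*s)^2) := by
    have hDD : (0:ℝ) < (1+b+a*c)^2 + (a*s)^2 := by positivity
    field_simp
    ring
  rw [harcval, e2, e1]
  field_simp
  linear_combination hb2 + (a^2+a^2*b)*hsc

lemma key_int (a : ℝ) (ha0 : 0 ≤ a) (ha1 : a < 1) :
    ∫ τ in (0:ℝ)..(2*Real.pi), a^2 * (Real.sin τ)^2 / (1 + a * Real.cos τ)
      = 2*Real.pi * (1 - Real.sqrt (1 - a^2)) := by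
  set b := Real.sqrt (1 - a^2) with hbdef
  have hcont : Continuous (fun τ : ℝ => a^2 * (Real.sin τ)^2 / (1 + a * Real.cos τ)) := by
    apply Continuous.div (by continuity) (by continuity)
    intro τ
    have := Real.neg_one_le_cos τ
    nlinarith
  rw [intervalIntegral.integral_eq_sub_of_hasDerivAt
      (fun τ _ => key_deriv a ha0 ha1 τ) (hcont.intervalIntegrable 0 (2*Real.pi))]
  simp [Real.sin_two_pi, Real.cos_two_pi]
  rw [← hbdef]
  ring

lemma part1 (a : ℝ) (ha0 : 0 ≤ a) (ha1 : a < 1) :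
    (1/(2*Real.pi)) * ∫ τ in (0:ℝ)..(2*Real.pi),
        a^2 * (Real.sin τ)^2 / (1 + a * Real.cos τ)
      = 1 - Real.sqrt (1 - a^2) := by
  rw [key_int a ha0 ha1]
  have : Real.pi ≠ 0 := Real.pi_ne_zero
  field_simp

lemma part3 (p : ℝ) (hp : p ∈ Set.Ioo (1/2 : ℝ) 1) :
    1 - Real.sqrt (1 - (2*p - 1)^2) = 1 - 2 * Real.sqrt (p*(1-p)) := by
  have h : 1 - (2*p - 1)^2 = 2^2 * (p*(1-p)) := by ring
  rw [h, Real.sqrt_mul (by positivity), Real.sqrt_sq (by norm_num : (0:ℝ) ≤ 2)]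

lemma part2 (p : ℝ) (hp : p ∈ Set.Ioo (1/2 : ℝ) 1) (T : ℝ) :
    (∫ τ in (0:ℝ)..(2*Real.pi),
        (deriv (fun T' => Real.log
          ((1 + (2*p - 1) * Real.cos (τ - T')) / (2*Real.pi))) T)^2
          * ((1 + (2*p - 1) * Real.cos (τ - T)) / (2*Real.pi)))
      = 1 - 2 * Real.sqrt (p*(1-p)) := by
  obtain ⟨hp1, hp2⟩ := hp
  set a := 2*p - 1 with hadef
  have ha0 : 0 ≤ a := by simp [hadef]; linarith
  have ha1 : a < 1 := by simp [hadef]; linarith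
  have hpi : (0:ℝ) < 2*Real.pi := by positivity
  have hden : ∀ x : ℝ, 0 < 1 + a * Real.cos x := by
    intro x; nlinarith [Real.neg_one_le_cos x]
  -- pointwise: the integrand equals g (τ - T) where g x = a² sin²x/(1+a cos x) * (1/(2π))
  set g : ℝ → ℝ := fun x => a^2 * (Real.sin x)^2 / (1 + a * Real.cos x) * (1/(2*Real.pi))
    with hgdef
  have hpoint : ∀ τ : ℝ,
      (deriv (fun T' => Real.log
        ((1 + a * Real.cos (τ - T')) / (2*Real.pi))) T)^2
        * ((1 + a * Real.cos (τ - T)) / (2*Real.pi)) = g (τ - T) := by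
    intro τ
    have hc : HasDerivAt (fun T' : ℝ => τ - T') (-1) T := by
      simpa using (hasDerivAt_id T).const_sub τ
    have hcos : HasDerivAt (fun T' : ℝ => Real.cos (τ - T'))
        (-Real.sin (τ - T) * (-1)) T := (Real.hasDerivAt_cos (τ - T)).comp T hc
    have hinner : HasDerivAt (fun T' : ℝ => (1 + a * Real.cos (τ - T')) / (2*Real.pi))
        ((a * (-Real.sin (τ - T) * (-1))) / (2*Real.pi)) T :=
      ((hcos.const_mul a).const_add 1).div_const (2*Real.pi)
    have hne : (1 + a * Real.cos (τ - T)) / (2*Real.pi) ≠ 0 :=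
      ne_of_gt (div_pos (hden _) hpi)
    have hlog := (hinner.log hne).deriv
    rw [hlog]
    simp only [hgdef]
    set s := Real.sin (τ - T) with hs
    set d := 1 + a * Real.cos (τ - T) with hd
    have hd0 : (0:ℝ) < d := hden _
    have hπ : (2*Real.pi) ≠ 0 := by positivity
    have e : a * (-s * -1) / (2 * Real.pi) / (d / (2 * Real.pi)) = a * s / d := by
      rw [div_div_div_comm, div_self hπ, div_one]
      congr 1
      ring
    rw [e, div_pow, div_mul_div_comm]
    rw [div_mul_div_comm, div_eq_div_iff (by positivity) (by positivity)]
    ring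
  rw [intervalIntegral.integral_congr (fun τ _ => hpoint τ)]
  rw [intervalIntegral.integral_comp_sub_right g T]
  have hper : Function.Periodic g (2*Real.pi) := by
    intro x
    simp only [hgdef, Real.sin_add_two_pi, Real.cos_add_two_pi]
  have hint : ∀ s t : ℝ, IntervalIntegrable g MeasureTheory.volume s t := by
    intro s t
    apply Continuous.intervalIntegrable
    apply Continuous.mul _ continuous_const
    exact Continuous.div (continuous_const.mul (Real.continuous_sin.pow 2))
      (continuous_const.add (continuous_const.mul Real.continuous_cos))
      (fun x => (hden x).ne')
  have := hper.intervalIntegral_add_eq (0 - T) 0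
  rw [show (2*Real.pi - T) = (0 - T) + 2*Real.pi by ring, this, zero_add]
  have hg : ∫ x in (0:ℝ)..(2*Real.pi), g x
      = (∫ τ in (0:ℝ)..(2*Real.pi), a^2 * (Real.sin τ)^2 / (1 + a * Real.cos τ))
        * (1/(2*Real.pi)) := by
    simp only [hgdef]
    exact intervalIntegral.integral_mul_const _ _
  rw [hg, key_int a ha0 ha1]
  have h3 := part3 p ⟨hp1, hp2⟩
  rw [← hadef] at h3
  have hcancel : 2*Real.pi * (1 - Real.sqrt (1 - a^2)) * (1/(2*Real.pi))
      = 1 - Real.sqrt (1 - a^2) := by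
    have hπ : (2*Real.pi) ≠ 0 := by positivity
    field_simp
  rw [hcancel, h3]

/-- Fisher information of the local clock measurement, fixed
purity: `(1/2π)∫₀^{2π} a² sin²τ/(1 + a cos τ) dτ = 1 − √(1−a²)` for
`0 ≤ a < 1`; in particular, for the outcome distribution
`P_{T,p}(τ) = (1/2π)(1 + (2p−1)cos(τ−T))` with `p ∈ (1/2,1)`, the classical
Fisher information with respect to `T` equals
`1 − √(1−(2p−1)²) = 1 − 2√(p(1−p))`. -/
theorem stmt_10 :
    (∀ a : ℝ, 0 ≤ a → a < 1 →
      (1/(2*Real.pi)) * ∫ τ in (0:ℝ)..(2*Real.pi),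
          a^2 * (Real.sin τ)^2 / (1 + a * Real.cos τ)
        = 1 - Real.sqrt (1 - a^2)) ∧
    (∀ p : ℝ, p ∈ Set.Ioo (1/2 : ℝ) 1 → ∀ T : ℝ,
      (∫ τ in (0:ℝ)..(2*Real.pi),
          (deriv (fun T' => Real.log
            ((1 + (2*p - 1) * Real.cos (τ - T')) / (2*Real.pi))) T)^2
            * ((1 + (2*p - 1) * Real.cos (τ - T)) / (2*Real.pi)))
        = 1 - 2 * Real.sqrt (p*(1-p))) ∧
    (∀ p : ℝ, p ∈ Set.Ioo (1/2 : ℝ) 1 →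
      1 - Real.sqrt (1 - (2*p - 1)^2) = 1 - 2 * Real.sqrt (p*(1-p))) := by
  exact ⟨part1, part2, part3⟩
end

section
/- (Fisher information for known decay rate.) For all reals γ > 0 and T > 0, ∫₀^{2π} e^{−2γT} (sin τ − γ cos τ)² / (2π·(1 + e^{−γT} cos τ)) dτ = 1 − γ² − √(1 − e^{−2γT}) + γ²/√(1 − e^{−2γT}). -/
open Real intervalIntegral

lemma intA (a : ℝ) (ha0 : 0 < a) (ha1 : a < 1) :
    ∫ τ in (0:ℝ)..(2*Real.pi), 1/(1+a*Real.cos τ)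
      = 2*Real.pi/Real.sqrt (1-a^2) := by
  set s := Real.sqrt (1-a^2) with hs
  have hs0 : 0 < s := Real.sqrt_pos.mpr (by nlinarith)
  have hs2 : s^2 = 1 - a^2 := Real.sq_sqrt (by nlinarith)
  have hD : ∀ τ : ℝ, 0 < 1 + a*Real.cos τ := fun τ => by
    nlinarith [Real.neg_one_le_cos τ, Real.cos_le_one τ]
  have hV : ∀ τ : ℝ, 0 < 1 + s + a*Real.cos τ := fun τ => by
    nlinarith [Real.neg_one_le_cos τ]
  have key : ∀ τ : ℝ, HasDerivAt (fun τ => (τ - 2*Real.arctan (a*Real.sin τ/(1+s+a*Real.cos τ)))/s)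
      (1/(1+a*Real.cos τ)) τ := by
    intro τ
    have h1 : HasDerivAt (fun τ : ℝ => a*Real.sin τ) (a*Real.cos τ) τ :=
      (Real.hasDerivAt_sin τ).const_mul a
    have h2 : HasDerivAt (fun τ : ℝ => 1+s+a*Real.cos τ) (-(a*Real.sin τ)) τ := by
      simpa using ((Real.hasDerivAt_cos τ).const_mul a).const_add (1+s)
    have h3 := ((h1.div h2 (ne_of_gt (hV τ))).arctan.const_mul 2)
    have h4 := ((hasDerivAt_id τ).sub h3).div_const s
    have hDne : (1+a*Real.cos τ) ≠ 0 := (hD τ).ne'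
    have hVne : (1+s+a*Real.cos τ) ≠ 0 := (hV τ).ne'
    have e2 : a * Real.cos τ * (1 + s + a * Real.cos τ) - a * Real.sin τ * -(a * Real.sin τ)
        = (1+s)*(a*Real.cos τ+1-s) := by
      linear_combination hs2 + a^2*(Real.sin_sq_add_cos_sq τ)
    have e3 : 1 + (a * Real.sin τ / (1 + s + a * Real.cos τ)) ^ 2
        = 2*(1+s)*(1+a*Real.cos τ)/(1+s+a*Real.cos τ)^2 := by
      field_simp [hVne]
      linear_combination hs2 + a^2*(Real.sin_sq_add_cos_sq τ)
    simp only [Pi.div_apply] at h4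
    rw [e2, e3] at h4
    have h1s : (0:ℝ) < 1+s := by positivity
    have e4 : (1 - 2*(1/(2*(1+s)*(1+a*Real.cos τ)/(1+s+a*Real.cos τ)^2)
        * ((1+s)*(a*Real.cos τ+1-s)/(1+s+a*Real.cos τ)^2)))/s = 1/(1+a*Real.cos τ) := by
      rw [one_div_div]
      have h1sne : (1:ℝ)+s ≠ 0 := h1s.ne'
      field_simp [hVne, hDne, hs0.ne', h1sne]
      ring
    rwa [e4] at h4
  rw [intervalIntegral.integral_eq_sub_of_hasDerivAt (fun τ _ => key τ)
    ((continuous_const.div (by continuity) (fun τ => (hD τ).ne')).intervalIntegrable _ _)]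
  simp [Real.sin_two_pi]

lemma intB (a : ℝ) (ha0 : 0 < a) (ha1 : a < 1) :
    ∫ τ in (0:ℝ)..(2*Real.pi), Real.sin τ/(1+a*Real.cos τ) = 0 := by
  have hD : ∀ τ : ℝ, 0 < 1 + a*Real.cos τ := fun τ => by
    nlinarith [Real.neg_one_le_cos τ, Real.cos_le_one τ]
  have key : ∀ τ : ℝ, HasDerivAt (fun τ => -Real.log (1+a*Real.cos τ)/a)
      (Real.sin τ/(1+a*Real.cos τ)) τ := by
    intro τ
    have h2 : HasDerivAt (fun τ : ℝ => 1+a*Real.cos τ) (-(a*Real.sin τ)) τ := by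
      simpa using ((Real.hasDerivAt_cos τ).const_mul a).const_add 1
    have h3 := (h2.log (hD τ).ne').neg.div_const a
    refine h3.congr_deriv ?_
    field_simp [(hD τ).ne', ha0.ne']
  rw [intervalIntegral.integral_eq_sub_of_hasDerivAt (fun τ _ => key τ)
    ((Real.continuous_sin.div (by continuity) (fun τ => (hD τ).ne')).intervalIntegrable _ _)]
  simp [Real.cos_two_pi]

/-- Fisher information for known decay rate:
`∫₀^{2π} e^{−2γT}(sin τ − γ cos τ)²/(2π(1 + e^{−γT} cos τ)) dτ
  = 1 − γ² − √(1 − e^{−2γT}) + γ²/√(1 − e^{−2γT})` for `γ, T > 0`. -/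
theorem stmt_12 (γ T : ℝ) (hγ : 0 < γ) (hT : 0 < T) :
    ∫ τ in (0:ℝ)..(2*Real.pi),
        Real.exp (-2*γ*T) * (Real.sin τ - γ * Real.cos τ)^2
          / (2*Real.pi * (1 + Real.exp (-γ*T) * Real.cos τ))
      = 1 - γ^2 - Real.sqrt (1 - Real.exp (-2*γ*T))
        + γ^2 / Real.sqrt (1 - Real.exp (-2*γ*T)) := by
  set a := Real.exp (-γ*T) with haa
  have ha0 : 0 < a := Real.exp_pos _
  have ha1 : a < 1 := Real.exp_lt_one_iff.mpr (by nlinarith)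
  have hA : Real.exp (-2*γ*T) = a^2 := by
    rw [haa, sq, ← Real.exp_add]
    ring_nf
  have hD : ∀ τ : ℝ, 0 < 1 + a*Real.cos τ := fun τ => by
    nlinarith [Real.neg_one_le_cos τ, Real.cos_le_one τ]
  set s := Real.sqrt (1-a^2) with hs
  have hs0 : 0 < s := Real.sqrt_pos.mpr (by nlinarith)
  have hs2 : s^2 = 1 - a^2 := Real.sq_sqrt (by nlinarith)
  have hpi : (0:ℝ) < Real.pi := Real.pi_pos
  -- pointwise decomposition
  have hpt : ∀ τ : ℝ, Real.exp (-2*γ*T) * (Real.sin τ - γ * Real.cos τ)^2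
          / (2*Real.pi * (1 + a * Real.cos τ))
      = ((1-γ^2) + (γ^2-1)*a*Real.cos τ - 2*γ*a*Real.sin τ)/(2*Real.pi)
        + (γ*a/Real.pi) * (Real.sin τ/(1+a*Real.cos τ))
        + ((γ^2-(1-a^2))/(2*Real.pi)) * (1/(1+a*Real.cos τ)) := by
    intro τ
    rw [hA]
    field_simp [(hD τ).ne', hpi.ne']
    linear_combination a^2*(Real.sin_sq_add_cos_sq τ)
  -- integrability of pieces
  have hc1 : IntervalIntegrable (fun τ => ((1-γ^2) + (γ^2-1)*a*Real.cos τ - 2*γ*a*Real.sin τ)/(2*Real.pi))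
      MeasureTheory.volume 0 (2*Real.pi) := by
    apply Continuous.intervalIntegrable
    exact ((continuous_const.add (continuous_const.mul Real.continuous_cos)).sub
      (continuous_const.mul Real.continuous_sin)).div_const _
  have hc2 : IntervalIntegrable (fun τ => (γ*a/Real.pi) * (Real.sin τ/(1+a*Real.cos τ)))
      MeasureTheory.volume 0 (2*Real.pi) := by
    apply Continuous.intervalIntegrable
    exact continuous_const.mul (Real.continuous_sin.div
      (continuous_const.add (continuous_const.mul Real.continuous_cos)) (fun τ => (hD τ).ne'))
  have hc3 : IntervalIntegrable (fun τ => ((γ^2-(1-a^2))/(2*Real.pi)) * (1/(1+a*Real.cos τ)))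
      MeasureTheory.volume 0 (2*Real.pi) := by
    apply Continuous.intervalIntegrable
    exact continuous_const.mul (continuous_const.div
      (continuous_const.add (continuous_const.mul Real.continuous_cos)) (fun τ => (hD τ).ne'))
  have key : (∫ τ in (0:ℝ)..(2*Real.pi),
        Real.exp (-2*γ*T) * (Real.sin τ - γ * Real.cos τ)^2
          / (2*Real.pi * (1 + a * Real.cos τ)))
      = (∫ τ in (0:ℝ)..(2*Real.pi), ((1-γ^2) + (γ^2-1)*a*Real.cos τ - 2*γ*a*Real.sin τ)/(2*Real.pi))
        + (∫ τ in (0:ℝ)..(2*Real.pi), (γ*a/Real.pi) * (Real.sin τ/(1+a*Real.cos τ)))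
        + (∫ τ in (0:ℝ)..(2*Real.pi), ((γ^2-(1-a^2))/(2*Real.pi)) * (1/(1+a*Real.cos τ))) := by
    rw [← intervalIntegral.integral_add hc1 hc2, ← intervalIntegral.integral_add (hc1.add hc2) hc3]
    exact intervalIntegral.integral_congr (fun τ _ => hpt τ)
  -- first integral
  have i1 : (∫ τ in (0:ℝ)..(2*Real.pi), ((1-γ^2) + (γ^2-1)*a*Real.cos τ - 2*γ*a*Real.sin τ)/(2*Real.pi))
      = 1 - γ^2 := by
    have key1 : ∀ τ : ℝ, HasDerivAt
        (fun τ => ((1-γ^2)*τ + ((γ^2-1)*a*Real.sin τ + 2*γ*a*Real.cos τ))/(2*Real.pi))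
        (((1-γ^2) + (γ^2-1)*a*Real.cos τ - 2*γ*a*Real.sin τ)/(2*Real.pi)) τ := by
      intro τ
      have hid : HasDerivAt (fun x : ℝ => (1-γ^2)*x) (1-γ^2) τ := by
        simpa using (hasDerivAt_id τ).const_mul (1-γ^2)
      have h := (hid.add
        (((Real.hasDerivAt_sin τ).const_mul ((γ^2-1)*a)).add
          ((Real.hasDerivAt_cos τ).const_mul (2*γ*a)))).div_const (2*Real.pi)
      refine h.congr_deriv ?_
      ring
    rw [intervalIntegral.integral_eq_sub_of_hasDerivAt (fun τ _ => key1 τ) hc1]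
    rw [Real.sin_two_pi, Real.cos_two_pi, Real.sin_zero, Real.cos_zero]
    field_simp
    ring
  have i2 : (∫ τ in (0:ℝ)..(2*Real.pi), (γ*a/Real.pi) * (Real.sin τ/(1+a*Real.cos τ))) = 0 := by
    rw [intervalIntegral.integral_const_mul, intB a ha0 ha1, mul_zero]
  have i3 : (∫ τ in (0:ℝ)..(2*Real.pi), ((γ^2-(1-a^2))/(2*Real.pi)) * (1/(1+a*Real.cos τ)))
      = (γ^2-(1-a^2))/s := by
    rw [intervalIntegral.integral_const_mul, intA a ha0 ha1, ← hs]
    field_simp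
  rw [key, i1, i2, i3, hA, ← hs]
  field_simp
  linear_combination hs2
end

section
/- (Standard deviation bounds the inaccuracy.) Let (Ω, μ) be a probability space and X : Ω → ℝ a square-integrable random variable with mean T (i.e. ∫ X dμ = T) and variance σ². Fix P ∈ (0,1) and define the inaccuracy δ(P) = inf{δ ≥ 0 : μ{ω : |X(ω) − T| ≤ δ/2} ≥ P}. Then σ² ≥ ((1 − P)/4) · δ(P)²; in particular σ ≥ √((1−P)/4) · δ(P). -/
open MeasureTheory

/-- Standard deviation bounds the inaccuracy: for a
square-integrable random variable `X` with mean `T` and variance `σ²` on a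
probability space, and `P ∈ (0,1)`, the inaccuracy
`δ(P) = inf{δ ≥ 0 : μ(|X − T| ≤ δ/2) ≥ P}` satisfies
`σ² ≥ ((1−P)/4)·δ(P)²`; in particular `σ ≥ √((1−P)/4)·δ(P)`. -/
theorem stmt_15 {Ω : Type*} [MeasurableSpace Ω] (μ : Measure Ω)
    [IsProbabilityMeasure μ] (X : Ω → ℝ) (hXmeas : Measurable X)
    (hX2 : MemLp X 2 μ) (T : ℝ) (hmean : ∫ ω, X ω ∂μ = T)
    (σ2 : ℝ) (hvar : ∫ ω, (X ω - T)^2 ∂μ = σ2)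
    (P : ℝ) (hP : P ∈ Set.Ioo (0:ℝ) 1) :
    ((1 - P)/4)
        * (sInf {δ : ℝ | 0 ≤ δ ∧ P ≤ (μ {ω | |X ω - T| ≤ δ/2}).toReal})^2
      ≤ σ2 ∧
    Real.sqrt ((1 - P)/4)
        * sInf {δ : ℝ | 0 ≤ δ ∧ P ≤ (μ {ω | |X ω - T| ≤ δ/2}).toReal}
      ≤ Real.sqrt σ2 := by
  obtain ⟨hP0, hP1⟩ := hP
  set S := {δ : ℝ | 0 ≤ δ ∧ P ≤ (μ {ω | |X ω - T| ≤ δ/2}).toReal} with hS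
  have hσ2nn : 0 ≤ σ2 := hvar ▸ integral_nonneg fun ω => sq_nonneg _
  have hvariance : ProbabilityTheory.variance X μ = σ2 := by
    rw [ProbabilityTheory.variance_eq_integral hXmeas.aemeasurable]
    rw [show (∫ x, X x ∂μ) = T from hmean]
    exact hvar
  have h1P : 0 < 1 - P := by linarith
  -- key membership lemma
  have hmem : ∀ ε : ℝ, 0 < ε → Real.sqrt (4 * (σ2 + ε) / (1 - P)) ∈ S := by
    intro ε hε
    set d := Real.sqrt (4 * (σ2 + ε) / (1 - P)) with hd
    have hargpos : 0 < 4 * (σ2 + ε) / (1 - P) := by positivity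
    have hdpos : 0 < d := Real.sqrt_pos.mpr hargpos
    have hcpos : 0 < d / 2 := by linarith
    refine ⟨hdpos.le, ?_⟩
    have hcheb := ProbabilityTheory.meas_ge_le_variance_div_sq (μ := μ) hX2 hcpos
    rw [hvariance, show (∫ x, X x ∂μ) = T from hmean] at hcheb
    have hd2 : (d / 2) ^ 2 = (σ2 + ε) / (1 - P) := by
      rw [div_pow, hd, Real.sq_sqrt hargpos.le]
      ring
    have hfrac : σ2 / ((d/2)^2) ≤ 1 - P := by
      rw [hd2, div_div_eq_mul_div, div_le_iff₀ (by positivity)]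
      nlinarith
    set A := {ω | |X ω - T| ≤ d / 2} with hA
    have hAmeas : MeasurableSet A := by
      apply measurableSet_le (by measurability) measurable_const
    have hcompl : Aᶜ ⊆ {ω | d / 2 ≤ |X ω - T|} := by
      intro ω hω
      simp only [hA, Set.mem_compl_iff, Set.mem_setOf_eq, not_le] at hω ⊢
      exact hω.le
    have hμcompl : μ Aᶜ ≤ ENNReal.ofReal (1 - P) :=
      le_trans (measure_mono hcompl)
        (le_trans hcheb (ENNReal.ofReal_le_ofReal hfrac))
    have hμcomplR : (μ Aᶜ).toReal ≤ 1 - P := by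
      calc (μ Aᶜ).toReal ≤ (ENNReal.ofReal (1 - P)).toReal :=
            ENNReal.toReal_mono ENNReal.ofReal_ne_top hμcompl
        _ = 1 - P := ENNReal.toReal_ofReal h1P.le
    have : (μ A).toReal = 1 - (μ Aᶜ).toReal := by
      rw [prob_compl_eq_one_sub hAmeas]
      rw [ENNReal.toReal_sub_of_le (prob_le_one) (by simp)]
      simp
    rw [this]
    linarith
  have hne : S.Nonempty := ⟨_, hmem 1 one_pos⟩
  have hbdd : BddBelow S := ⟨0, fun x hx => hx.1⟩
  have hδnn : 0 ≤ sInf S := le_csInf hne fun b hb => hb.1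
  have hmain : ((1 - P)/4) * (sInf S)^2 ≤ σ2 := by
    apply le_of_forall_pos_le_add
    intro ε hε
    have hle : sInf S ≤ Real.sqrt (4 * (σ2 + ε) / (1 - P)) :=
      csInf_le hbdd (hmem ε hε)
    have hsq : (sInf S)^2 ≤ 4 * (σ2 + ε) / (1 - P) := by
      calc (sInf S)^2 ≤ (Real.sqrt (4 * (σ2 + ε) / (1 - P)))^2 :=
            pow_le_pow_left₀ hδnn hle 2
        _ = 4 * (σ2 + ε) / (1 - P) := Real.sq_sqrt (by positivity)
      
    rw [le_div_iff₀ h1P] at hsq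
    nlinarith [hsq]
  refine ⟨hmain, ?_⟩
  calc Real.sqrt ((1 - P)/4) * sInf S
      = Real.sqrt ((1 - P)/4 * (sInf S)^2) := by
        rw [Real.sqrt_mul (by positivity), Real.sqrt_sq hδnn]
    _ ≤ Real.sqrt σ2 := Real.sqrt_le_sqrt hmain
end
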